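/- arXiv:1904.02131 — 11 statements merged into one kernel-verified Lean document; each statement's English description precedes it below -/
import Mathlib

section
/- Let N be a positive integer, let τ be a positive integer with τ ≤ N, and let m ∈ ℝ^N be a vector with nonnegative entries. An (m,τ)-filling-problem solution exists if and only if for every n ∈ {1,…,N}, τ·m[n] ≤ Σ_{i=1}^{N} m[i]. -/
open Finset

lemma interp {ι : Type*} (s : Finset ι) (l u : ι → ℝ) (h : ∀ i ∈ s, l i ≤ u i) (c : ℝ)
    (hc1 : ∑ i ∈ s, l i ≤ c) (hc2 : c ≤ ∑ i ∈ s, u i) :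
    ∃ d : ι → ℝ, (∀ i ∈ s, l i ≤ d i ∧ d i ≤ u i) ∧ ∑ i ∈ s, d i = c := by
  rcases eq_or_lt_of_le (le_trans hc1 hc2) with hLU | hLU
  · exact ⟨l, fun i hi => ⟨le_refl _, h i hi⟩, le_antisymm hc1 (by linarith)⟩
  · set L := ∑ i ∈ s, l i with hL
    set U := ∑ i ∈ s, u i with hU
    set t := (c - L) / (U - L) with ht
    have hUL : 0 < U - L := by linarith
    have ht0 : 0 ≤ t := div_nonneg (by linarith) (by linarith)
    have ht1 : t ≤ 1 := by rw [ht, div_le_one hUL]; linarith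
    refine ⟨fun i => l i + t * (u i - l i), fun i hi => ⟨?_, ?_⟩, ?_⟩
    · simp only []
      nlinarith [h i hi]
    · simp only []
      nlinarith [h i hi]
    · rw [Finset.sum_add_distrib, ← Finset.mul_sum, Finset.sum_sub_distrib, ← hL, ← hU, ht]
      field_simp
      ring

lemma double_count {ι : Type*} [Fintype ι] [DecidableEq ι] (A : Finset ι) (τ : ℕ)
    (α : Finset ι → ℝ) (hsupp : ∀ S, α S ≠ 0 → S ⊆ A ∧ S.card = τ) :
    ∑ n ∈ A, ∑ S ∈ univ.filter (fun S => n ∈ S), α S = (τ : ℝ) * ∑ S : Finset ι, α S := by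
  have h1 : ∀ n ∈ A, ∑ S ∈ univ.filter (fun S => n ∈ S), α S
      = ∑ S : Finset ι, if n ∈ S then α S else 0 := by
    intro n _; rw [Finset.sum_filter]
  rw [Finset.sum_congr rfl h1, Finset.sum_comm, Finset.mul_sum]
  refine Finset.sum_congr rfl fun S _ => ?_
  rcases eq_or_ne (α S) 0 with h | h
  · simp [h]
  · obtain ⟨hSA, hScard⟩ := hsupp S h
    rw [Finset.sum_ite_mem, Finset.inter_eq_right.mpr hSA, Finset.sum_const, hScard]
    simp [mul_comm]

lemma construct {ι : Type*} [Fintype ι] [DecidableEq ι] :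
    ∀ (k τ : ℕ) (A : Finset ι) (m : ι → ℝ), A.card ≤ k → 0 < τ → τ ≤ A.card →
    (∀ n ∈ A, 0 ≤ m n) → (∀ n ∈ A, (τ : ℝ) * m n ≤ ∑ i ∈ A, m i) →
    ∃ α : Finset ι → ℝ, (∀ S, 0 ≤ α S) ∧ (∀ S, α S ≠ 0 → S ⊆ A ∧ S.card = τ) ∧
      ∀ n ∈ A, ∑ S ∈ univ.filter (fun S => n ∈ S), α S = m n := by
  intro k
  induction k with
  | zero => intro τ A m hk hτ hτA _ _; omega
  | succ k IH =>
    intro τ A m hk hτ hτA hm hcond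
    rcases eq_or_lt_of_le (show 1 ≤ τ from hτ) with hτ1 | hτ2
    · -- τ = 1
      subst hτ1
      refine ⟨fun S => ∑ j ∈ A, if S = {j} then m j else 0, ?_, ?_, ?_⟩
      · intro S
        refine Finset.sum_nonneg fun j hj => ?_
        split
        · exact hm j hj
        · exact le_refl _
      · intro S hS
        obtain ⟨j, hjA, hjne⟩ := Finset.exists_ne_zero_of_sum_ne_zero hS
        have hSj : S = {j} := by by_contra h; simp [h] at hjne
        subst hSj
        exact ⟨Finset.singleton_subset_iff.mpr hjA, Finset.card_singleton j⟩
      · intro n hn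
        rw [Finset.sum_comm]
        have : ∀ j ∈ A, ∑ S ∈ univ.filter (fun S => n ∈ S), (if S = ({j} : Finset ι) then m j else 0)
            = if n = j then m j else 0 := by
          intro j hj
          rw [Finset.sum_ite_eq' (univ.filter (fun S => n ∈ S)) ({j} : Finset ι) (fun _ => m j)]
          simp [eq_comm]
        rw [Finset.sum_congr rfl this, Finset.sum_ite_eq, if_pos hn]

    · rcases eq_or_lt_of_le hτA with hcard | hlt
      · -- tight case A.card = τ
        have hcard : A.card = τ := hcard.symm
        set M := ∑ i ∈ A, m i with hMdef
        have hM0 : 0 ≤ M := Finset.sum_nonneg hm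
        have hτR : (0:ℝ) < τ := by exact_mod_cast hτ
        have hM : ∀ n ∈ A, (τ:ℝ) * m n = M := by
          have hz : ∑ n ∈ A, (M - (τ:ℝ) * m n) = 0 := by
            rw [Finset.sum_sub_distrib, Finset.sum_const, ← Finset.mul_sum, hcard, ← hMdef,
              nsmul_eq_mul]
            ring
          have h2 := (Finset.sum_eq_zero_iff_of_nonneg (fun n hn => by linarith [hcond n hn])).mp hz
          intro n hn
          linarith [h2 n hn]
        refine ⟨fun S => if S = A then M / (τ:ℝ) else 0, ?_, ?_, ?_⟩
        · intro S; simp only []; split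
          · positivity
          · exact le_refl _
        · intro S hS
          have hSA : S = A := by by_contra h; simp [h] at hS
          subst hSA; exact ⟨Finset.Subset.refl _, hcard⟩
        · intro n hn
          rw [Finset.sum_ite_eq' (univ.filter (fun S => n ∈ S)) A (fun _ => M / (τ:ℝ))]
          rw [if_pos (by simp [hn])]
          have := hM n hn
          field_simp
          linarith

      · -- main inductive step
        have hτ2 : 2 ≤ τ := hτ2
        have hτR : (0:ℝ) < τ := by positivity
        obtain ⟨n₀, hn₀A, hmin⟩ := A.exists_min_image m (Finset.card_pos.mp (by omega))
        set A' := A.erase n₀ with hA'def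
        have hn₀A' : n₀ ∉ A' := Finset.notMem_erase n₀ A
        have hA'card : A'.card = A.card - 1 := Finset.card_erase_of_mem hn₀A
        have hA'sub : A' ⊆ A := Finset.erase_subset n₀ A
        set M := ∑ i ∈ A, m i with hMdef
        have hsumA' : ∑ i ∈ A', m i = M - m n₀ := Finset.sum_erase_eq_sub hn₀A
        have hm0 : 0 ≤ m n₀ := hm n₀ hn₀A
        have hub : ∀ n ∈ A, m n ≤ M / τ := fun n hn =>
          (le_div_iff₀ hτR).mpr (by rw [mul_comm]; exact hcond n hn)
        set K := M / τ - m n₀ with hKdef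
        have hK0 : 0 ≤ K := by have := hub n₀ hn₀A; rw [hKdef]; linarith
        have hτK : (τ:ℝ) * K = M - τ * m n₀ := by
          rw [hKdef]; field_simp
        set l : ι → ℝ := fun n => max 0 (m n - K) with hldef
        set u : ι → ℝ := fun _ => m n₀ with hudef
        set c : ℝ := ((τ:ℝ) - 1) * m n₀ with hcdef
        have hlu : ∀ n ∈ A', l n ≤ u n := by
          intro n hn
          simp only [hldef, hudef, max_le_iff]
          have := hub n (hA'sub hn)
          refine ⟨hm0, ?_⟩
          rw [hKdef]; linarith
        have hcA' : ((A'.card : ℝ)) = (A.card : ℝ) - 1 := by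
          rw [hA'card, Nat.cast_sub (by omega)]; norm_num
        have hupper : c ≤ ∑ i ∈ A', u i := by
          simp only [hudef, Finset.sum_const, nsmul_eq_mul]
          have h1 : ((τ:ℝ) - 1) ≤ (A'.card : ℝ) := by
            rw [hcA']
            have : (τ:ℝ) ≤ (A.card:ℝ) := by exact_mod_cast le_of_lt hlt
            linarith
          exact mul_le_mul_of_nonneg_right h1 hm0
        have hlower : ∑ i ∈ A', l i ≤ c := by
          set P := A'.filter (fun n => K < m n) with hPdef
          have hPsub : P ⊆ A' := Finset.filter_subset _ _
          have hl_eq : ∑ n ∈ A', l n = ∑ n ∈ P, (m n - K) := by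
            rw [← Finset.sum_filter_add_sum_filter_not A' (fun n => K < m n) l]
            have h1 : ∀ n ∈ P, l n = m n - K := fun n hn =>
              max_eq_right (le_of_lt (by have := (Finset.mem_filter.mp hn).2; linarith))
            have h2 : ∀ n ∈ A'.filter (fun n => ¬ K < m n), l n = 0 := fun n hn =>
              max_eq_left (by have := (Finset.mem_filter.mp hn).2; push_neg at this; linarith)
            rw [Finset.sum_congr rfl h1, Finset.sum_congr rfl h2, Finset.sum_const_zero, add_zero]
          rw [hl_eq]
          by_cases hP : P.card ≤ τ - 1
          · have h1 : ∑ n ∈ P, (m n - K) ≤ ∑ n ∈ P, m n₀ := by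
              refine Finset.sum_le_sum fun n hn => ?_
              have := hub n (hA'sub (hPsub hn))
              rw [hKdef]; linarith
            rw [Finset.sum_const, nsmul_eq_mul] at h1
            have h2 : (P.card : ℝ) ≤ (τ:ℝ) - 1 := by
              have h3 : (P.card : ℝ) ≤ ((τ - 1 : ℕ) : ℝ) := by exact_mod_cast hP
              rw [Nat.cast_sub (by omega)] at h3; simpa using h3
            rw [hcdef]
            nlinarith
          · have hτP : (τ:ℝ) ≤ (P.card:ℝ) := by exact_mod_cast (by omega : τ ≤ P.card)
            have h1 : ∑ n ∈ P, m n ≤ M - m n₀ := by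
              rw [← hsumA']
              exact Finset.sum_le_sum_of_subset_of_nonneg hPsub
                (fun n hn _ => hm n (hA'sub hn))
            have h2 : ∑ n ∈ P, (m n - K) = ∑ n ∈ P, m n - P.card * K := by
              rw [Finset.sum_sub_distrib, Finset.sum_const, nsmul_eq_mul]
            rw [h2, hcdef]
            nlinarith
        obtain ⟨d, hd, hdsum⟩ := interp A' l u hlu c hlower hupper
        have hd0 : ∀ n ∈ A', 0 ≤ d n := fun n hn => le_trans (le_max_left _ _) (hd n hn).1
        have hdK : ∀ n ∈ A', m n - K ≤ d n := fun n hn =>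
          le_trans (le_max_right _ _) (hd n hn).1
        have hdu : ∀ n ∈ A', d n ≤ m n₀ := fun n hn => (hd n hn).2
        have hcastτ1 : ((τ - 1 : ℕ) : ℝ) = (τ:ℝ) - 1 := by
          rw [Nat.cast_sub (by omega)]; norm_num
        -- first recursion : β for d with τ - 1
        obtain ⟨β, hβ0, hβsupp, hβsum⟩ := IH (τ - 1) A' d (by omega) (by omega) (by omega)
          hd0 (by
            intro n hn
            rw [hdsum, hcastτ1, hcdef]
            exact mul_le_mul_of_nonneg_left (hdu n hn) (by linarith [hτR, (by exact_mod_cast hτ2 : (2:ℝ) ≤ (τ:ℝ))]))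
        -- second recursion : γ for m - d with τ
        have hsum_m' : ∑ i ∈ A', (m i - d i) = M - τ * m n₀ := by
          rw [Finset.sum_sub_distrib, hsumA', hdsum, hcdef]; ring
        obtain ⟨γ, hγ0, hγsupp, hγsum⟩ := IH τ A' (fun n => m n - d n) (by omega) (by omega)
          (by omega) (fun n hn => by
            have := hdu n hn
            have := hmin n (hA'sub hn)
            linarith)
          (by
            intro n hn
            rw [hsum_m']
            have h1 : m n - d n ≤ K := by have := hdK n hn; linarith
            nlinarith)
        have hβn₀ : ∀ T, β T ≠ 0 → n₀ ∉ T := fun T h hc => hn₀A' ((hβsupp T h).1 hc)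
        have hβtot : ∑ T : Finset ι, β T = m n₀ := by
          have h := double_count A' (τ - 1) β hβsupp
          rw [Finset.sum_congr rfl hβsum, hdsum, hcdef, hcastτ1] at h
          have hτ1ne : ((τ:ℝ) - 1) ≠ 0 := by
            have : (2:ℝ) ≤ (τ:ℝ) := by exact_mod_cast hτ2
            linarith
          exact (mul_left_cancel₀ hτ1ne h).symm
        refine ⟨fun S => (if n₀ ∈ S then β (S.erase n₀) else 0) + γ S, ?_, ?_, ?_⟩
        · intro S
          refine add_nonneg ?_ (hγ0 S)
          split
          · exact hβ0 _
          · exact le_refl 0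
        · intro S hS
          simp only [] at hS
          by_cases hcase : (if n₀ ∈ S then β (S.erase n₀) else 0) = 0
          · have hγne : γ S ≠ 0 := by
              intro h0; apply hS; rw [hcase, h0, add_zero]
            obtain ⟨h1, h2⟩ := hγsupp S hγne
            exact ⟨h1.trans hA'sub, h2⟩
          · have hn₀S : n₀ ∈ S := by
              by_contra h; rw [if_neg h] at hcase; exact hcase rfl
            rw [if_pos hn₀S] at hcase
            obtain ⟨h1, h2⟩ := hβsupp _ hcase
            constructor
            · intro x hx
              by_cases hx0 : x = n₀
              · subst hx0; exact hn₀A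
              · exact hA'sub (h1 (Finset.mem_erase.mpr ⟨hx0, hx⟩))
            · have h3 := Finset.card_erase_of_mem hn₀S
              have hcpos : 0 < S.card := Finset.card_pos.mpr ⟨n₀, hn₀S⟩
              omega
        · intro n hn
          simp only []
          rw [Finset.sum_add_distrib]
          by_cases hnn₀ : n = n₀
          · subst hnn₀
            have hγpart : ∑ S ∈ univ.filter (fun S => n ∈ S), γ S = 0 :=
              Finset.sum_eq_zero (fun S hS => by
                by_contra h
                exact hn₀A' ((hγsupp S h).1 (Finset.mem_filter.mp hS).2))
            have h1 : ∑ S ∈ (univ : Finset (Finset ι)).filter (fun S => n ∈ S), (if n ∈ S then β (S.erase n) else 0)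
                = ∑ S ∈ (univ : Finset (Finset ι)).filter (fun S => n ∈ S), β (S.erase n) :=
              Finset.sum_congr rfl (fun S hS => if_pos (Finset.mem_filter.mp hS).2)
            have h2 : ∑ S ∈ (univ : Finset (Finset ι)).filter (fun S => n ∈ S), β (S.erase n)
                = ∑ T ∈ univ.filter (fun T => n ∉ T), β T := by
              refine Finset.sum_bij' (fun (S : Finset ι) _ => S.erase n) (fun (T : Finset ι) _ => insert n T) ?_ ?_ ?_ ?_ ?_
              · intro S hS
                simp only [Finset.mem_filter, Finset.mem_univ, true_and] at hS ⊢
                exact Finset.notMem_erase n S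
              · intro T hT
                simp only [Finset.mem_filter, Finset.mem_univ, true_and] at hT ⊢
                exact Finset.mem_insert_self n T
              · intro S hS
                simp only [Finset.mem_filter, Finset.mem_univ, true_and] at hS
                exact Finset.insert_erase hS
              · intro T hT
                simp only [Finset.mem_filter, Finset.mem_univ, true_and] at hT
                exact Finset.erase_insert hT
              · intro S hS
                rfl
            have h3 : ∑ T ∈ univ.filter (fun T => n ∉ T), β T = ∑ T : Finset ι, β T := by
              apply Finset.sum_subset (Finset.filter_subset _ _)
              intro T _ hT
              by_contra h
              apply hT
              simp only [Finset.mem_filter, Finset.mem_univ, true_and]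
              exact hβn₀ T h
            rw [h1, h2, h3, hβtot, hγpart, add_zero]
          · have hnA' : n ∈ A' := Finset.mem_erase.mpr ⟨hnn₀, hn⟩
            have hγpart := hγsum n hnA'
            have hβpart : ∑ S ∈ (univ : Finset (Finset ι)).filter (fun S => n ∈ S),
                (if n₀ ∈ S then β (S.erase n₀) else 0) = d n := by
              rw [← Finset.sum_filter, Finset.filter_filter]
              have hbij : ∑ S ∈ (univ : Finset (Finset ι)).filter (fun S => n ∈ S ∧ n₀ ∈ S), β (S.erase n₀)
                  = ∑ T ∈ univ.filter (fun T => n ∈ T ∧ n₀ ∉ T), β T := by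
                refine Finset.sum_bij' (fun (S : Finset ι) _ => S.erase n₀) (fun (T : Finset ι) _ => insert n₀ T) ?_ ?_ ?_ ?_ ?_
                · intro S hS
                  simp only [Finset.mem_filter, Finset.mem_univ, true_and] at hS ⊢
                  exact ⟨Finset.mem_erase.mpr ⟨hnn₀, hS.1⟩, Finset.notMem_erase n₀ S⟩
                · intro T hT
                  simp only [Finset.mem_filter, Finset.mem_univ, true_and] at hT ⊢
                  exact ⟨Finset.mem_insert_of_mem hT.1, Finset.mem_insert_self n₀ T⟩
                · intro S hS
                  simp only [Finset.mem_filter, Finset.mem_univ, true_and] at hS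
                  exact Finset.insert_erase hS.2
                · intro T hT
                  simp only [Finset.mem_filter, Finset.mem_univ, true_and] at hT
                  exact Finset.erase_insert hT.2
                · intro S hS
                  rfl
              rw [hbij]
              have hsub : ∑ T ∈ univ.filter (fun T => n ∈ T ∧ n₀ ∉ T), β T
                  = ∑ T ∈ univ.filter (fun T => n ∈ T), β T := by
                apply Finset.sum_subset
                · intro T hT
                  simp only [Finset.mem_filter, Finset.mem_univ, true_and] at hT ⊢
                  exact hT.1
                · intro T hT1 hT2
                  by_contra h
                  apply hT2
                  simp only [Finset.mem_filter, Finset.mem_univ, true_and] at hT1 ⊢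
                  exact ⟨hT1, hβn₀ T h⟩
              rw [hsub]
              exact hβsum n hnA'
            rw [hβpart, hγpart]
            ring

theorem stmt_1 (N τ : ℕ) (hN : 0 < N) (hτ : 0 < τ) (hτN : τ ≤ N)
    (m : Fin N → ℝ) (hm : ∀ n, 0 ≤ m n) :
    (∃ α : Finset (Fin N) → ℝ, (∀ S, 0 ≤ α S) ∧
      ∀ n : Fin N,
        ∑ S ∈ (Finset.univ.powersetCard τ).filter (fun S => n ∈ S), α S = m n) ↔
    (∀ n : Fin N, (τ : ℝ) * m n ≤ ∑ i, m i) := by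
  constructor
  · rintro ⟨α, hα0, hαsum⟩ n
    set Sal := ∑ S ∈ (univ : Finset (Fin N)).powersetCard τ, α S with hSaldef
    have hcard : ∀ S ∈ (univ : Finset (Fin N)).powersetCard τ, S.card = τ :=
      fun S hS => (Finset.mem_powersetCard.mp hS).2
    have h1 : m n ≤ Sal := by
      rw [← hαsum n]
      exact Finset.sum_le_sum_of_subset_of_nonneg (Finset.filter_subset _ _)
        (fun S _ _ => hα0 S)
    have h2 : ∑ i, m i = (τ:ℝ) * Sal := by
      calc ∑ i, m i
          = ∑ i, ∑ S ∈ ((univ : Finset (Fin N)).powersetCard τ).filter (fun S => i ∈ S), α S :=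
            Finset.sum_congr rfl fun i _ => (hαsum i).symm
        _ = ∑ i, ∑ S ∈ (univ : Finset (Fin N)).powersetCard τ, if i ∈ S then α S else 0 :=
            Finset.sum_congr rfl fun i _ => Finset.sum_filter _ _
        _ = ∑ S ∈ (univ : Finset (Fin N)).powersetCard τ, ∑ i, if i ∈ S then α S else 0 :=
            Finset.sum_comm
        _ = ∑ S ∈ (univ : Finset (Fin N)).powersetCard τ, (τ:ℝ) * α S := by
            refine Finset.sum_congr rfl fun S hS => ?_
            rw [Finset.sum_ite_mem, Finset.univ_inter, Finset.sum_const, hcard S hS,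
              nsmul_eq_mul]
        _ = (τ:ℝ) * Sal := (Finset.mul_sum _ _ _).symm
    rw [h2]
    exact mul_le_mul_of_nonneg_left h1 (by positivity)
  · intro h
    have hcardu : (univ : Finset (Fin N)).card = N := by simp
    obtain ⟨α, h0, hsupp, hsum⟩ := construct N τ (univ : Finset (Fin N)) m
      (le_of_eq hcardu) hτ (by omega) (fun n _ => hm n)
      (fun n _ => by simpa using h n)
    refine ⟨α, h0, fun n => ?_⟩
    rw [← hsum n (Finset.mem_univ n)]
    apply Finset.sum_subset
    · intro S hS
      simp only [Finset.mem_filter, Finset.mem_powersetCard, Finset.mem_univ, true_and] at hS ⊢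
      exact hS.2
    · intro S hS1 hS2
      by_contra hne
      obtain ⟨hsub, hc⟩ := hsupp S hne
      apply hS2
      simp only [Finset.mem_filter, Finset.mem_powersetCard, Finset.mem_univ, true_and] at hS1 ⊢
      exact ⟨⟨hsub, hc⟩, hS1⟩
end

section
/- Let N be a positive integer, let τ be a positive integer with τ ≤ N, and let m ∈ ℝ^N be a vector with nonnegative entries. If for every n ∈ {1,…,N} one has τ·m[n] ≤ Σ_{i=1}^{N} m[i], then an (m,τ)-filling-problem solution exists. -/
open Finset

private lemma key (N τ : ℕ) (hτ : 0 < τ) (hτN : τ ≤ N) :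
    ∀ k : ℕ, ∀ m : Fin N → ℝ, (∀ n, 0 ≤ m n) →
      (∀ n, (τ : ℝ) * m n ≤ ∑ i, m i) →
      ((univ.filter fun n => m n ≠ 0).card
        + (univ.filter fun n => (τ : ℝ) * m n ≠ ∑ i, m i).card ≤ k) →
      ∃ α : Finset (Fin N) → ℝ, (∀ S, 0 ≤ α S) ∧
        ∀ n : Fin N,
          ∑ S ∈ (univ.powersetCard τ).filter (fun S => n ∈ S), α S = m n := by
  intro k
  induction k with
  | zero =>
    intro m hm hcond hcard
    have hs : (univ.filter fun n => m n ≠ 0) = ∅ :=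
      Finset.card_eq_zero.mp (by omega)
    have hzero : ∀ n, m n = 0 := by
      intro n
      by_contra h
      have : n ∈ (univ.filter fun n => m n ≠ 0) := by simp [h]
      simp [hs] at this
    exact ⟨fun _ => 0, fun _ => le_refl _, fun n => by simp [hzero n]⟩
  | succ k IH =>
    intro m hm hcond hcard
    set T : ℝ := ∑ i, m i with hT
    rcases eq_or_lt_of_le (Finset.sum_nonneg fun i _ => hm i) with h0 | hpos
    · have hzero : ∀ n, m n = 0 := fun n =>
        (Finset.sum_eq_zero_iff_of_nonneg (fun i _ => hm i)).mp h0.symm n (mem_univ n)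
      exact ⟨fun _ => 0, fun _ => le_refl _, fun n => by simp [hzero n]⟩
    · have hτR : (0 : ℝ) < τ := by exact_mod_cast hτ
      have hTτ : (τ : ℝ) * (T / τ) = T := by field_simp
      set tight := univ.filter (fun n => (τ : ℝ) * m n = T) with htightdef
      set supp := univ.filter (fun n => m n ≠ 0) with hsuppdef
      have hts : tight ⊆ supp := by
        intro n hn
        simp only [htightdef, mem_filter, mem_univ, true_and] at hn
        simp only [hsuppdef, mem_filter, mem_univ, true_and]
        intro h
        rw [h, mul_zero] at hn
        linarith
      have htight_card : tight.card ≤ τ := by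
        have h1 : ∑ n ∈ tight, m n = tight.card * (T / τ) := by
          rw [Finset.sum_congr rfl (fun n hn => ?_), Finset.sum_const, nsmul_eq_mul]
          simp only [htightdef, mem_filter] at hn
          field_simp
          linarith [hn.2]
        have h2 : ∑ n ∈ tight, m n ≤ T :=
          Finset.sum_le_sum_of_subset_of_nonneg (subset_univ _) (fun i _ _ => hm i)
        have h3 : (tight.card : ℝ) * (T / τ) ≤ (τ : ℝ) * (T / τ) := by
          rw [hTτ]; linarith
        have h4 : (tight.card : ℝ) ≤ (τ : ℝ) :=
          le_of_mul_le_mul_right h3 (div_pos hpos hτR)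
        exact_mod_cast h4
      have hsupp_card : τ ≤ supp.card := by
        have h1 : T = ∑ n ∈ supp, m n := (Finset.sum_filter_ne_zero univ).symm
        have h2 : ∑ n ∈ supp, m n ≤ supp.card * (T / τ) := by
          rw [← nsmul_eq_mul, ← Finset.sum_const]
          refine Finset.sum_le_sum fun i _ => ?_
          have := hcond i
          rw [le_div_iff₀ hτR]; linarith
        have h3 : (τ : ℝ) * (T / τ) ≤ (supp.card : ℝ) * (T / τ) := by
          rw [hTτ]; linarith
        have h4 : (τ : ℝ) ≤ (supp.card : ℝ) :=
          le_of_mul_le_mul_right h3 (div_pos hpos hτR)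
        exact_mod_cast h4
      obtain ⟨S, hSt, hSs, hScard⟩ :=
        Finset.exists_subsuperset_card_eq hts htight_card hsupp_card
      have hNpos : 0 < N := lt_of_lt_of_le hτ hτN
      have : Nonempty (Fin N) := ⟨⟨0, hNpos⟩⟩
      have huniv_ne : (univ : Finset (Fin N)).Nonempty := univ_nonempty
      set f : Fin N → ℝ := fun n => if n ∈ S then m n else T / τ - m n with hfdef
      set t := univ.inf' huniv_ne f with htdef
      have ht_le : ∀ n, t ≤ f n := fun n => Finset.inf'_le f (mem_univ n)
      have ht_pos : 0 < t := by
        rw [htdef, Finset.lt_inf'_iff]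
        intro n _
        by_cases hn : n ∈ S
        · simp only [hfdef, hn, if_true]
          have : n ∈ supp := hSs hn
          simp only [hsuppdef, mem_filter, mem_univ, true_and] at this
          exact lt_of_le_of_ne (hm n) (Ne.symm this)
        · simp only [hfdef, hn, if_false]
          have hnt : n ∉ tight := fun h => hn (hSt h)
          simp only [htightdef, mem_filter, mem_univ, true_and] at hnt
          have := hcond n
          have hlt : (τ : ℝ) * m n < T := lt_of_le_of_ne this hnt
          have : (τ : ℝ) * m n < (τ : ℝ) * (T / τ) := by rw [hTτ]; exact hlt
          have := lt_of_mul_lt_mul_left this (le_of_lt hτR)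
          linarith
      obtain ⟨n₀, -, hn₀⟩ := Finset.exists_mem_eq_inf' huniv_ne f
      set m' : Fin N → ℝ := fun n => if n ∈ S then m n - t else m n with hm'def
      have hm' : ∀ n, 0 ≤ m' n := by
        intro n
        simp only [hm'def]
        by_cases hn : n ∈ S
        · simp only [hn, if_true]
          have := ht_le n
          simp only [hfdef, hn, if_true] at this
          linarith
        · simp only [hn, if_false]; exact hm n
      have hsum' : ∑ i, m' i = T - τ * t := by
        have he : ∀ i, m' i = m i - (if i ∈ S then t else 0) := by
          intro i; simp only [hm'def]; by_cases hi : i ∈ S <;> simp [hi]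
        rw [Finset.sum_congr rfl (fun i _ => he i), Finset.sum_sub_distrib,
          Finset.sum_ite_mem, Finset.univ_inter, Finset.sum_const, nsmul_eq_mul, hScard, ← hT]
      have hcond' : ∀ n, (τ : ℝ) * m' n ≤ ∑ i, m' i := by
        intro n
        rw [hsum']
        simp only [hm'def]
        by_cases hn : n ∈ S
        · simp only [hn, if_true]
          have := hcond n
          rw [mul_sub]
          linarith
        · simp only [hn, if_false]
          have := ht_le n
          simp only [hfdef, hn, if_false] at this
          have h2 : (τ : ℝ) * t ≤ (τ : ℝ) * (T / τ - m n) :=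
            mul_le_mul_of_nonneg_left this (le_of_lt hτR)
          rw [mul_sub, hTτ] at h2
          linarith
      have hsupp' : (univ.filter fun n => m' n ≠ 0) ⊆ supp := by
        intro n hn
        simp only [mem_filter, mem_univ, true_and] at hn
        simp only [hsuppdef, mem_filter, mem_univ, true_and]
        intro h
        apply hn
        have hnS : n ∉ S := by
          intro hnS
          have : n ∈ supp := hSs hnS
          simp only [hsuppdef, mem_filter, mem_univ, true_and] at this
          exact this h
        simp only [hm'def, hnS, if_false]
        exact h
      have hnt' : (univ.filter fun n => (τ : ℝ) * m' n ≠ ∑ i, m' i) ⊆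
          (univ.filter fun n => (τ : ℝ) * m n ≠ T) := by
        intro n hn
        simp only [mem_filter, mem_univ, true_and] at hn ⊢
        intro h
        apply hn
        have hnS : n ∈ S := hSt (by simp [htightdef, h])
        rw [hsum']
        simp only [hm'def, hnS, if_true, mul_sub]
        rw [h]
      have hmeas : (univ.filter fun n => m' n ≠ 0).card
          + (univ.filter fun n => (τ : ℝ) * m' n ≠ ∑ i, m' i).card ≤ k := by
        by_cases hn₀S : n₀ ∈ S
        · -- m' n₀ = 0, so support drops
          have hmn₀ : m' n₀ = 0 := by
            simp only [hm'def, hn₀S, if_true]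
            rw [htdef, hn₀]
            simp [hfdef, hn₀S]
          have h1 : (univ.filter fun n => m' n ≠ 0) ⊆ supp.erase n₀ := by
            intro n hn
            rw [Finset.mem_erase]
            refine ⟨?_, hsupp' hn⟩
            intro h
            simp only [mem_filter, mem_univ, true_and] at hn
            rw [h] at hn
            exact hn hmn₀
          have hn₀supp : n₀ ∈ supp := hSs hn₀S
          have h2 := Finset.card_le_card h1
          rw [Finset.card_erase_of_mem hn₀supp] at h2
          have h3 := Finset.card_le_card hnt'
          have h4 : 1 ≤ supp.card := Finset.card_pos.mpr ⟨n₀, hn₀supp⟩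
          omega
        · -- n₀ becomes tight
          have htn₀ : t = T / τ - m n₀ := by rw [htdef, hn₀]; simp [hfdef, hn₀S]
          have htight₀ : (τ : ℝ) * m' n₀ = ∑ i, m' i := by
            rw [hsum']
            simp only [hm'def, hn₀S, if_false]
            rw [htn₀, mul_sub, hTτ]
            ring
          have hn₀nt : n₀ ∈ (univ.filter fun n => (τ : ℝ) * m n ≠ T) := by
            simp only [mem_filter, mem_univ, true_and]
            intro h
            exact hn₀S (hSt (by simp [htightdef, h]))
          have h1 : (univ.filter fun n => (τ : ℝ) * m' n ≠ ∑ i, m' i) ⊆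
              (univ.filter fun n => (τ : ℝ) * m n ≠ T).erase n₀ := by
            intro n hn
            rw [Finset.mem_erase]
            refine ⟨?_, hnt' hn⟩
            intro h
            simp only [mem_filter, mem_univ, true_and] at hn
            rw [h] at hn
            exact hn htight₀
          have h2 := Finset.card_le_card h1
          rw [Finset.card_erase_of_mem hn₀nt] at h2
          have h3 := Finset.card_le_card hsupp'
          have h4 : 1 ≤ (univ.filter fun n => (τ : ℝ) * m n ≠ T).card :=
            Finset.card_pos.mpr ⟨n₀, hn₀nt⟩
          omega
      obtain ⟨α', hα'0, hα'⟩ := IH m' hm' hcond' hmeas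
      refine ⟨fun S' => α' S' + if S' = S then t else 0, ?_, ?_⟩
      · intro S'
        by_cases h : S' = S
        · simp only [h, if_true]
          linarith [hα'0 S, ht_pos]
        · simp only [h, if_false, add_zero]
          exact hα'0 S'
      · intro n
        have hSmem : S ∈ (univ.powersetCard τ) := by
          rw [Finset.mem_powersetCard]; exact ⟨subset_univ S, hScard⟩
        rw [Finset.sum_add_distrib, hα' n, Finset.sum_ite_eq' _ S (fun _ => t)]
        by_cases hn : n ∈ S
        · rw [if_pos (by simp [Finset.mem_filter, hSmem, hn])]
          simp only [hm'def, hn, if_true]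
          ring
        · rw [if_neg (by simp [Finset.mem_filter, hn])]
          simp [hm'def, hn]

theorem stmt_3 (N τ : ℕ) (hN : 0 < N) (hτ : 0 < τ) (hτN : τ ≤ N)
    (m : Fin N → ℝ) (hm : ∀ n, 0 ≤ m n)
    (hcond : ∀ n : Fin N, (τ : ℝ) * m n ≤ ∑ i, m i) :
    ∃ α : Finset (Fin N) → ℝ, (∀ S, 0 ≤ α S) ∧
      ∀ n : Fin N,
        ∑ S ∈ (Finset.univ.powersetCard τ).filter (fun S => n ∈ S), α S = m n :=
  key N τ hτ hτN _ m hm hcond le_rfl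
end

section
/- Let N be a positive integer and let μ ∈ ℝ^N satisfy 0 ≤ μ[n] ≤ 1 for all n ∈ {1,…,N}. Suppose t := Σ_{n=1}^{N} μ[n] is a positive integer. Then a (μ,t)-filling-problem solution exists; consequently a capacity-achieving storage placement for the heterogeneous storage-constrained PIR problem with storage vector μ exists. -/
open Finset

lemma filling_aux : ∀ (k N t : ℕ) (μ : Fin N → ℝ),
    (Finset.univ.filter (fun n => μ n ≠ 0 ∧ μ n ≠ 1)).card = k →
    (∀ n, 0 ≤ μ n) → (∀ n, μ n ≤ 1) → ((t : ℝ) = ∑ n, μ n) →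
    ∃ α : Finset (Fin N) → ℝ, (∀ S, 0 ≤ α S) ∧
      ∀ n : Fin N,
        ∑ S ∈ (Finset.univ.powersetCard t).filter (fun S => n ∈ S), α S = μ n := by
  intro k
  induction k using Nat.strong_induction_on with
  | _ k ih =>
    intro N t μ hk h0 h1 hsum
    rcases Nat.eq_zero_or_pos k with hk0 | hkpos
    · -- base case: every entry is 0 or 1
      subst hk0
      have hbin : ∀ n, μ n = 0 ∨ μ n = 1 := by
        intro n
        by_contra h
        push_neg at h
        have : n ∈ Finset.univ.filter (fun n => μ n ≠ 0 ∧ μ n ≠ 1) := by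
          simp [h.1, h.2]
        rw [Finset.card_eq_zero.mp hk] at this
        simp at this
      set S : Finset (Fin N) := Finset.univ.filter (fun n => μ n = 1) with hS
      have hcard : S.card = t := by
        have : ((S.card : ℕ) : ℝ) = (t : ℝ) := by
          rw [hsum]
          rw [← Finset.sum_filter_add_sum_filter_not Finset.univ (fun n => μ n = 1) μ]
          have h2 : ∑ n ∈ Finset.univ.filter (fun n => ¬ μ n = 1), μ n = 0 := by
            apply Finset.sum_eq_zero
            intro n hn
            simp only [Finset.mem_filter] at hn
            rcases hbin n with h | h
            · exact h
            · exact absurd h hn.2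
          have h3 : ∑ n ∈ S, μ n = S.card := by
            rw [Finset.sum_congr rfl (fun n hn => (Finset.mem_filter.mp hn).2)]
            simp
            rfl
          rw [h2, h3, add_zero]
        exact_mod_cast this
      refine ⟨fun T => if T = S then 1 else 0, fun T => by positivity, fun n => ?_⟩
      rw [Finset.sum_ite_eq' _ S (fun _ => (1:ℝ))]
      by_cases hn : n ∈ S
      · have : S ∈ (Finset.univ.powersetCard t).filter (fun T => n ∈ T) := by
          simp [Finset.mem_powersetCard_univ, hcard, hn]
        rw [if_pos this]
        have := (Finset.mem_filter.mp hn).2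
        simp [this]
      · have : S ∉ (Finset.univ.powersetCard t).filter (fun T => n ∈ T) := by
          simp [Finset.mem_powersetCard_univ, hcard, hn]
        rw [if_neg this]
        rcases hbin n with h | h
        · exact h.symm
        · exact absurd (by simp [hS, h] : n ∈ S) hn
    · -- inductive step
      set F : Finset (Fin N) := Finset.univ.filter (fun n => μ n ≠ 0 ∧ μ n ≠ 1) with hF
      have hF1 : 1 ≤ F.card := hk ▸ hkpos
      -- show F.card ≠ 1
      have hFne1 : F.card ≠ 1 := by
        intro hc
        obtain ⟨i, hi⟩ := Finset.card_eq_one.mp hc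
        have hiF : i ∈ F := by rw [hi]; exact Finset.mem_singleton_self i
        have hifrac : μ i ≠ 0 ∧ μ i ≠ 1 := (Finset.mem_filter.mp hiF).2
        have hbin : ∀ n, n ≠ i → μ n = 0 ∨ μ n = 1 := by
          intro n hn
          by_contra h
          push_neg at h
          have : n ∈ F := by simp [hF, h.1, h.2]
          rw [hi] at this
          exact hn (Finset.mem_singleton.mp this)
        set m := ((Finset.univ.erase i).filter (fun n => μ n = 1)).card with hm
        have hsum2 : (t : ℝ) = μ i + m := by
          rw [hsum, ← Finset.add_sum_erase _ _ (Finset.mem_univ i)]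
          congr 1
          rw [← Finset.sum_filter_add_sum_filter_not (Finset.univ.erase i) (fun n => μ n = 1) μ]
          have h2 : ∑ n ∈ (Finset.univ.erase i).filter (fun n => ¬ μ n = 1), μ n = 0 := by
            apply Finset.sum_eq_zero
            intro n hn
            simp only [Finset.mem_filter, Finset.mem_erase] at hn
            rcases hbin n hn.1.1 with h | h
            · exact h
            · exact absurd h hn.2
          have h3 : ∑ n ∈ (Finset.univ.erase i).filter (fun n => μ n = 1), μ n
              = ((Finset.univ.erase i).filter (fun n => μ n = 1)).card := by
            rw [Finset.sum_congr rfl (fun n hn => (Finset.mem_filter.mp hn).2)]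
            simp
          rw [h2, h3, add_zero]
        have hμi0 : 0 < μ i := lt_of_le_of_ne (h0 i) (Ne.symm hifrac.1)
        have hμi1 : μ i < 1 := lt_of_le_of_ne (h1 i) hifrac.2
        have h4 : (m : ℝ) < t := by linarith
        have h5 : (t : ℝ) < m + 1 := by linarith
        have h4' : m < t := by exact_mod_cast h4
        have h5' : t < m + 1 := by exact_mod_cast h5
        omega
      obtain ⟨i, hiF, j, hjF, hij⟩ := Finset.one_lt_card.mp (lt_of_le_of_ne hF1 (Ne.symm hFne1))
      have hifrac := (Finset.mem_filter.mp hiF).2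
      have hjfrac := (Finset.mem_filter.mp hjF).2
      have hμi0 : 0 < μ i := lt_of_le_of_ne (h0 i) (Ne.symm hifrac.1)
      have hμi1 : μ i < 1 := lt_of_le_of_ne (h1 i) hifrac.2
      have hμj0 : 0 < μ j := lt_of_le_of_ne (h0 j) (Ne.symm hjfrac.1)
      have hμj1 : μ j < 1 := lt_of_le_of_ne (h1 j) hjfrac.2
      set ε := min (1 - μ i) (μ j) with hε
      set δ := min (μ i) (1 - μ j) with hδ
      have hε0 : 0 < ε := lt_min (by linarith) hμj0
      have hδ0 : 0 < δ := lt_min hμi0 (by linarith)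
      set μ' : Fin N → ℝ := fun n => if n = i then μ i + ε else if n = j then μ j - ε else μ n with hμ'
      set μ'' : Fin N → ℝ := fun n => if n = i then μ i - δ else if n = j then μ j + δ else μ n with hμ''
      -- bounds and sums for μ', μ''
      have hεle1 : ε ≤ 1 - μ i := min_le_left _ _
      have hεlej : ε ≤ μ j := min_le_right _ _
      have hδlei : δ ≤ μ i := min_le_left _ _
      have hδle1 : δ ≤ 1 - μ j := min_le_right _ _
      have h0' : ∀ n, 0 ≤ μ' n := by
        intro n
        simp only [hμ']
        split_ifs with h h
        · linarith
        · linarith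
        · exact h0 n
      have h1' : ∀ n, μ' n ≤ 1 := by
        intro n
        simp only [hμ']
        split_ifs with h h
        · linarith
        · linarith [h1 j]
        · exact h1 n
      have h0'' : ∀ n, 0 ≤ μ'' n := by
        intro n
        simp only [hμ'']
        split_ifs with h h
        · linarith
        · linarith [h0 j]
        · exact h0 n
      have h1'' : ∀ n, μ'' n ≤ 1 := by
        intro n
        simp only [hμ'']
        split_ifs with h h
        · linarith [h1 i]
        · linarith
        · exact h1 n
      have hpt : ∀ n, μ' n = μ n + (if n = i then ε else 0) - (if n = j then ε else 0) := by
        intro n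
        by_cases h : n = i
        · subst h; simp [hμ', hij]
        · by_cases h' : n = j
          · subst h'; simp [hμ', h]
          · simp [hμ', h, h']
      have hpt'' : ∀ n, μ'' n = μ n - (if n = i then δ else 0) + (if n = j then δ else 0) := by
        intro n
        by_cases h : n = i
        · subst h; simp [hμ'', hij]
        · by_cases h' : n = j
          · subst h'; simp [hμ'', h]
          · simp [hμ'', h, h']
      have hsum' : (t : ℝ) = ∑ n, μ' n := by
        rw [Finset.sum_congr rfl (fun n _ => hpt n)]
        rw [Finset.sum_sub_distrib, Finset.sum_add_distrib]
        rw [Finset.sum_ite_eq' Finset.univ i (fun _ => ε), Finset.sum_ite_eq' Finset.univ j (fun _ => ε)]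
        simp [hsum]
      have hsum'' : (t : ℝ) = ∑ n, μ'' n := by
        rw [Finset.sum_congr rfl (fun n _ => hpt'' n)]
        rw [Finset.sum_add_distrib, Finset.sum_sub_distrib]
        rw [Finset.sum_ite_eq' Finset.univ i (fun _ => δ), Finset.sum_ite_eq' Finset.univ j (fun _ => δ)]
        simp [hsum]
      -- fractional counts decrease
      have hsub' : (Finset.univ.filter (fun n => μ' n ≠ 0 ∧ μ' n ≠ 1)).card < k := by
        have hsubF : (Finset.univ.filter (fun n => μ' n ≠ 0 ∧ μ' n ≠ 1)) ⊆ F := by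
          intro n hn
          simp only [Finset.mem_filter, Finset.mem_univ, true_and] at hn
          by_cases h : n = i
          · exact h ▸ hiF
          by_cases h' : n = j
          · exact h' ▸ hjF
          have : μ' n = μ n := by simp [hμ', h, h']
          rw [this] at hn
          simp [hF, hn.1, hn.2]
        rcases min_cases (1 - μ i) (μ j) with ⟨hc, _⟩ | ⟨hc, _⟩
        · -- ε = 1 - μ i, so μ' i = 1
          have hnoti : i ∉ (Finset.univ.filter (fun n => μ' n ≠ 0 ∧ μ' n ≠ 1)) := by
            simp only [Finset.mem_filter, Finset.mem_univ, true_and, not_and, not_not]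
            intro _
            simp only [hμ', if_pos rfl]
            rw [hε, hc]; ring
          calc (Finset.univ.filter (fun n => μ' n ≠ 0 ∧ μ' n ≠ 1)).card
              ≤ (F.erase i).card := Finset.card_le_card (fun n hn =>
                Finset.mem_erase.mpr ⟨fun h => hnoti (h ▸ hn), hsubF hn⟩)
            _ < F.card := Finset.card_erase_lt_of_mem hiF
            _ = k := hk
        · -- ε = μ j, so μ' j = 0
          have hnotj : j ∉ (Finset.univ.filter (fun n => μ' n ≠ 0 ∧ μ' n ≠ 1)) := by
            simp only [Finset.mem_filter, Finset.mem_univ, true_and, not_and]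
            intro hcon
            exact absurd (by simp [hμ', if_neg hij.symm, hε, hc] : μ' j = 0) hcon
          calc (Finset.univ.filter (fun n => μ' n ≠ 0 ∧ μ' n ≠ 1)).card
              ≤ (F.erase j).card := Finset.card_le_card (fun n hn =>
                Finset.mem_erase.mpr ⟨fun h => hnotj (h ▸ hn), hsubF hn⟩)
            _ < F.card := Finset.card_erase_lt_of_mem hjF
            _ = k := hk
      have hsub'' : (Finset.univ.filter (fun n => μ'' n ≠ 0 ∧ μ'' n ≠ 1)).card < k := by
        have hsubF : (Finset.univ.filter (fun n => μ'' n ≠ 0 ∧ μ'' n ≠ 1)) ⊆ F := by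
          intro n hn
          simp only [Finset.mem_filter, Finset.mem_univ, true_and] at hn
          by_cases h : n = i
          · exact h ▸ hiF
          by_cases h' : n = j
          · exact h' ▸ hjF
          have : μ'' n = μ n := by simp [hμ'', h, h']
          rw [this] at hn
          simp [hF, hn.1, hn.2]
        rcases min_cases (μ i) (1 - μ j) with ⟨hc, _⟩ | ⟨hc, _⟩
        · -- δ = μ i, so μ'' i = 0
          have hnoti : i ∉ (Finset.univ.filter (fun n => μ'' n ≠ 0 ∧ μ'' n ≠ 1)) := by
            simp only [Finset.mem_filter, Finset.mem_univ, true_and, not_and]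
            intro hcon
            exact absurd (by simp [hμ'', hδ, hc] : μ'' i = 0) hcon
          calc (Finset.univ.filter (fun n => μ'' n ≠ 0 ∧ μ'' n ≠ 1)).card
              ≤ (F.erase i).card := Finset.card_le_card (fun n hn =>
                Finset.mem_erase.mpr ⟨fun h => hnoti (h ▸ hn), hsubF hn⟩)
            _ < F.card := Finset.card_erase_lt_of_mem hiF
            _ = k := hk
        · -- δ = 1 - μ j, so μ'' j = 1
          have hnotj : j ∉ (Finset.univ.filter (fun n => μ'' n ≠ 0 ∧ μ'' n ≠ 1)) := by
            simp only [Finset.mem_filter, Finset.mem_univ, true_and, not_and, not_not]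
            intro _
            show (if j = i then μ i - δ else if j = j then μ j + δ else μ j) = 1
            rw [if_neg hij.symm, if_pos rfl, hδ, hc]; ring
          calc (Finset.univ.filter (fun n => μ'' n ≠ 0 ∧ μ'' n ≠ 1)).card
              ≤ (F.erase j).card := Finset.card_le_card (fun n hn =>
                Finset.mem_erase.mpr ⟨fun h => hnotj (h ▸ hn), hsubF hn⟩)
            _ < F.card := Finset.card_erase_lt_of_mem hjF
            _ = k := hk
      obtain ⟨α', hα'0, hα'⟩ := ih _ hsub' N t μ' rfl h0' h1' hsum'
      obtain ⟨α'', hα''0, hα''⟩ := ih _ hsub'' N t μ'' rfl h0'' h1'' hsum''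
      set c : ℝ := δ / (ε + δ) with hc
      have hεδ : 0 < ε + δ := by linarith
      have hc0 : 0 ≤ c := by positivity
      have hc1 : c ≤ 1 := by
        rw [hc, div_le_one hεδ]; linarith
      refine ⟨fun S => c * α' S + (1 - c) * α'' S, fun S => add_nonneg (mul_nonneg hc0 (hα'0 S)) (mul_nonneg (by linarith) (hα''0 S)), fun n => ?_⟩
      rw [Finset.sum_add_distrib, ← Finset.mul_sum, ← Finset.mul_sum, hα' n, hα'' n]
      have h1c : 1 - c = ε / (ε + δ) := by
        rw [hc]; field_simp; ring
      by_cases h : n = i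
      · subst h
        simp only [hμ', hμ'', if_pos rfl]
        rw [hc, h1c]
        field_simp
        ring
      by_cases h' : n = j
      · subst h'
        simp only [hμ', hμ'', if_neg h, if_pos rfl, eq_self_iff_true, if_true]
        rw [hc, h1c]
        field_simp
        ring
      · simp only [hμ', hμ'', if_neg h, if_neg h']
        ring

theorem stmt_5 (N : ℕ) (hN : 0 < N) (μ : Fin N → ℝ)
    (hμ0 : ∀ n, 0 ≤ μ n) (hμ1 : ∀ n, μ n ≤ 1)
    (t : ℕ) (ht : 0 < t) (hts : (t : ℝ) = ∑ n, μ n) :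
    ∃ α : Finset (Fin N) → ℝ, (∀ S, 0 ≤ α S) ∧
      ∀ n : Fin N,
        ∑ S ∈ (Finset.univ.powersetCard t).filter (fun S => n ∈ S), α S = μ n :=
  filling_aux _ N t μ rfl hμ0 hμ1 hts
end

section
/- Let N be a positive integer and let μ ∈ ℝ^N satisfy 0 ≤ μ[n] ≤ 1 for all n ∈ {1,…,N}. Suppose t := Σ_{n=1}^{N} μ[n] is a positive integer. Then there exists a (μ,t)-filling-problem solution in which at most N of the coefficients α_S are nonzero; that is, there exist an integer F ≤ N, t-element subsets 𝒩_1, …, 𝒩_F of {1,…,N}, and positive reals α_1, …, α_F such that for every n ∈ {1,…,N}, Σ_{f : n ∈ 𝒩_f} α_f = μ[n]. -/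
open Finset

private lemma key_filling : ∀ (k N : ℕ), 0 < N → ∀ μ : Fin N → ℝ,
    (∀ n, 0 ≤ μ n) → (∀ n, μ n ≤ 1) →
    ∀ t : ℕ, 0 < t → (t : ℝ) = ∑ n, μ n →
    (Finset.univ.filter (fun n => μ n ≠ 0 ∧ μ n ≠ 1)).card = k →
    ∃ F : ℕ, F ≤ max k 1 ∧
      ∃ (𝒩 : Fin F → Finset (Fin N)) (α : Fin F → ℝ),
        (∀ f, (𝒩 f).card = t) ∧ (∀ f, 0 < α f) ∧
        ∀ n : Fin N, ∑ f ∈ Finset.univ.filter (fun f => n ∈ 𝒩 f), α f = μ n := by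
  intro k
  induction k using Nat.strong_induction_on with
  | _ k IH =>
  intro N hN μ hμ0 hμ1 t ht hts hB
  rcases Nat.eq_zero_or_pos k with hk0 | hkpos
  · -- all coordinates are 0 or 1
    subst hk0
    have hall : ∀ n : Fin N, μ n = 0 ∨ μ n = 1 := by
      intro n
      by_contra h
      push_neg at h
      have : n ∈ Finset.univ.filter (fun n => μ n ≠ 0 ∧ μ n ≠ 1) := by
        simp [h.1, h.2]
      rw [Finset.card_eq_zero.mp hB] at this
      exact absurd this (by simp)
    set O := Finset.univ.filter (fun n => μ n = 1) with hO
    have hsum : (t : ℝ) = O.card := by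
      rw [hts]
      have : ∀ n : Fin N, μ n = if μ n = 1 then (1:ℝ) else 0 := by
        intro n
        rcases hall n with h | h <;> simp [h]
      calc ∑ n, μ n = ∑ n, if μ n = 1 then (1:ℝ) else 0 :=
            Finset.sum_congr rfl (fun n _ => this n)
        _ = O.card := by rw [Finset.sum_boole]
    have hcard : O.card = t := by exact_mod_cast hsum.symm
    refine ⟨1, by simp, fun _ => O, fun _ => 1, fun _ => hcard, fun _ => one_pos, ?_⟩
    intro n
    rw [Finset.sum_filter, Fin.sum_univ_one]
    by_cases h : n ∈ O
    · have : μ n = 1 := (Finset.mem_filter.mp h).2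
      simp [h, this]
    · have h1 : μ n ≠ 1 := by
        intro hc
        exact h (Finset.mem_filter.mpr ⟨Finset.mem_univ n, hc⟩)
      have : μ n = 0 := (hall n).resolve_right h1
      simp [h, this]
  · -- k ≥ 1
    set B := Finset.univ.filter (fun n => μ n ≠ 0 ∧ μ n ≠ 1) with hBdef
    rcases eq_or_lt_of_le (show 1 ≤ k from hkpos) with hk1 | hk2
    · -- k = 1 : impossible by integrality
      exfalso
      obtain ⟨n0, hn0⟩ := Finset.card_eq_one.mp (hB.trans hk1.symm)
      have hn0B : n0 ∈ B := hn0 ▸ Finset.mem_singleton_self n0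
      have hn0prop : μ n0 ≠ 0 ∧ μ n0 ≠ 1 := (Finset.mem_filter.mp hn0B).2
      have hrest : ∀ n ∈ Finset.univ.erase n0, μ n = if μ n = 1 then (1:ℝ) else 0 := by
        intro n hn
        have hne : n ≠ n0 := (Finset.mem_erase.mp hn).1
        have : n ∉ B := by
          rw [hn0]; simp [hne]
        have : μ n = 0 ∨ μ n = 1 := by
          by_contra h
          push_neg at h
          exact this (Finset.mem_filter.mpr ⟨Finset.mem_univ n, h⟩)
        rcases this with h | h <;> simp [h]
      set c : ℕ := ((Finset.univ.erase n0).filter (fun n => μ n = 1)).card with hc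
      have hsplit : (t : ℝ) = μ n0 + c := by
        rw [hts, ← Finset.add_sum_erase _ μ (Finset.mem_univ n0)]
        congr 1
        calc ∑ n ∈ Finset.univ.erase n0, μ n
            = ∑ n ∈ Finset.univ.erase n0, if μ n = 1 then (1:ℝ) else 0 :=
              Finset.sum_congr rfl hrest
          _ = c := by rw [Finset.sum_boole]
      have h0 : 0 < μ n0 := lt_of_le_of_ne (hμ0 n0) (Ne.symm hn0prop.1)
      have h1 : μ n0 < 1 := lt_of_le_of_ne (hμ1 n0) hn0prop.2
      have hlt1 : (c : ℝ) < t := by linarith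
      have hlt2 : (t : ℝ) < c + 1 := by linarith
      have : c < t := by exact_mod_cast hlt1
      have : t < c + 1 := by exact_mod_cast hlt2
      omega
    · -- k ≥ 2 : the inductive step
      have hNE : Nonempty (Fin N) := ⟨⟨0, hN⟩⟩
      set Z := Finset.univ.filter (fun n => μ n = 1) with hZ
      set P := Finset.univ.filter (fun n => 0 < μ n) with hP
      have hZP : Z ⊆ P := by
        intro n hn
        have : μ n = 1 := (Finset.mem_filter.mp hn).2
        exact Finset.mem_filter.mpr ⟨Finset.mem_univ n, by rw [this]; norm_num⟩
      have hZt : Z.card ≤ t := by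
        have hr : (Z.card : ℝ) ≤ t := by
          rw [hts]
          calc (Z.card : ℝ) = ∑ n ∈ Z, μ n := by
                rw [Finset.sum_congr rfl (fun n hn => ((Finset.mem_filter.mp hn).2 : μ n = 1))]
                simp
                rfl
            _ ≤ ∑ n, μ n :=
                Finset.sum_le_sum_of_subset_of_nonneg (Finset.subset_univ Z)
                  (fun n _ _ => hμ0 n)
        exact_mod_cast hr
      have htP : t ≤ P.card := by
        have hr : (t : ℝ) ≤ P.card := by
          rw [hts]
          have heq : ∑ n ∈ P, μ n = ∑ n, μ n := by
            apply Finset.sum_subset (Finset.subset_univ P)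
            intro n _ hn
            have : ¬ 0 < μ n := fun h => hn (Finset.mem_filter.mpr ⟨Finset.mem_univ n, h⟩)
            linarith [hμ0 n]
          calc ∑ n, μ n = ∑ n ∈ P, μ n := heq.symm
            _ ≤ ∑ _n ∈ P, (1:ℝ) := Finset.sum_le_sum (fun n _ => hμ1 n)
            _ = P.card := by simp
        exact_mod_cast hr
      obtain ⟨S, hZS, hSP, hScard⟩ := Finset.exists_subsuperset_card_eq hZP hZt htP
      set cf : Fin N → ℝ := fun n => if n ∈ S then μ n else 1 - μ n with hcf
      have hcfpos : ∀ n, 0 < cf n := by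
        intro n
        by_cases h : n ∈ S
        · have : 0 < μ n := (Finset.mem_filter.mp (hSP h)).2
          simpa [hcf, h] using this
        · have : μ n ≠ 1 := by
            intro hc
            exact h (hZS (Finset.mem_filter.mpr ⟨Finset.mem_univ n, hc⟩))
          have : μ n < 1 := lt_of_le_of_ne (hμ1 n) this
          simp [hcf, h]
          linarith
      have hUne : (Finset.univ : Finset (Fin N)).Nonempty := Finset.univ_nonempty
      set α : ℝ := Finset.univ.inf' hUne cf with hαdef
      have hαle : ∀ n, α ≤ cf n := fun n => Finset.inf'_le cf (Finset.mem_univ n)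
      have hαpos : 0 < α := by
        rw [hαdef, Finset.lt_inf'_iff]
        exact fun n _ => hcfpos n
      obtain ⟨n1, _, hn1⟩ := Finset.exists_mem_eq_inf' hUne cf
      have hn1' : α = cf n1 := hn1
      have hn1valS : n1 ∈ S → μ n1 = α := by
        intro h
        have := hn1'
        rw [hcf] at this
        simp only [h, if_true] at this
        linarith
      have hn1valC : n1 ∉ S → μ n1 = 1 - α := by
        intro h
        have := hn1'
        rw [hcf] at this
        simp only [h, if_false] at this
        linarith
      have hα1 : α < 1 := by
        by_contra h
        push_neg at h
        have hempty : Finset.univ.filter (fun n => μ n ≠ 0 ∧ μ n ≠ 1) = ∅ := by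
          rw [Finset.eq_empty_iff_forall_notMem]
          intro n hn
          have hprop := (Finset.mem_filter.mp hn).2
          by_cases hS : n ∈ S
          · have : (1:ℝ) ≤ μ n := by
              have := hαle n; rw [hcf] at this; simp [hS] at this; linarith
            exact hprop.2 (le_antisymm (hμ1 n) this)
          · have : μ n ≤ 0 := by
              have := hαle n; rw [hcf] at this; simp [hS] at this; linarith
            exact hprop.1 (le_antisymm this (hμ0 n))
        rw [hBdef, hempty] at hB
        simp at hB
        omega
      have h1α : 0 < 1 - α := by linarith
      set ν : Fin N → ℝ := fun n => (μ n - if n ∈ S then α else 0) / (1 - α) with hν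
      have hν0 : ∀ n, 0 ≤ ν n := by
        intro n
        apply div_nonneg _ (le_of_lt h1α)
        by_cases h : n ∈ S
        · have := hαle n; rw [hcf] at this; simp [h] at this ⊢; linarith
        · simp [h]; exact hμ0 n
      have hν1 : ∀ n, ν n ≤ 1 := by
        intro n
        rw [hν, div_le_one h1α]
        by_cases h : n ∈ S
        · simp [h]; linarith [hμ1 n]
        · have := hαle n; rw [hcf] at this; simp [h] at this ⊢; linarith
      have hνsum : (t : ℝ) = ∑ n, ν n := by
        have hite : ∑ n, (if n ∈ S then α else (0:ℝ)) = t * α := by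
          rw [Finset.sum_ite_mem, Finset.univ_inter, Finset.sum_const, hScard,
            nsmul_eq_mul]
        rw [hν]
        simp only
        rw [← Finset.sum_div, Finset.sum_sub_distrib, hite, ← hts]
        field_simp
      set B' := Finset.univ.filter (fun n => ν n ≠ 0 ∧ ν n ≠ 1) with hB'
      have hνμ0 : ∀ n, μ n = 0 → ν n = 0 := by
        intro n h
        have hnS : n ∉ S := by
          intro hc
          have : 0 < μ n := (Finset.mem_filter.mp (hSP hc)).2
          linarith
        simp [hν, hnS, h]
      have hνμ1 : ∀ n, μ n = 1 → ν n = 1 := by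
        intro n h
        have hnS : n ∈ S := hZS (Finset.mem_filter.mpr ⟨Finset.mem_univ n, h⟩)
        rw [hν]
        simp only [hnS, if_true, h]
        field_simp
      have hn1val : ν n1 = 0 ∨ ν n1 = 1 := by
        by_cases h : n1 ∈ S
        · left
          simp [hν, h, hn1valS h]
        · right
          rw [hν]
          simp only [h, if_false, hn1valC h, sub_zero]
          field_simp
      have hn1B : n1 ∈ B := by
        rw [hBdef]
        refine Finset.mem_filter.mpr ⟨Finset.mem_univ n1, ?_, ?_⟩
        · by_cases h : n1 ∈ S
          · rw [hn1valS h]; exact ne_of_gt hαpos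
          · rw [hn1valC h]; intro hc; linarith
        · by_cases h : n1 ∈ S
          · rw [hn1valS h]; exact ne_of_lt hα1
          · rw [hn1valC h]; intro hc
            have : α = 0 := by linarith
            linarith
      have hB'sub : B' ⊆ B.erase n1 := by
        intro n hn
        have hprop := (Finset.mem_filter.mp hn).2
        have hnB : n ∈ B := by
          rw [hBdef]
          refine Finset.mem_filter.mpr ⟨Finset.mem_univ n, ?_, ?_⟩
          · intro h; exact hprop.1 (hνμ0 n h)
          · intro h; exact hprop.2 (hνμ1 n h)
        have hne : n ≠ n1 := by
          intro h
          subst h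
          rcases hn1val with h | h
          · exact hprop.1 h
          · exact hprop.2 h
        exact Finset.mem_erase.mpr ⟨hne, hnB⟩
      have hk' : B'.card < k := by
        calc B'.card ≤ (B.erase n1).card := Finset.card_le_card hB'sub
          _ = B.card - 1 := Finset.card_erase_of_mem hn1B
          _ < k := by omega
      have hk'le : B'.card ≤ k - 1 := by
        have := Finset.card_le_card hB'sub
        rw [Finset.card_erase_of_mem hn1B] at this
        omega
      obtain ⟨F', hF', 𝒩', α', hcard', hpos', hsum'⟩ :=
        IH B'.card hk' N hN ν hν0 hν1 t ht hνsum rfl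
      refine ⟨F' + 1, ?_, Fin.cons S 𝒩', Fin.cons α (fun f => (1 - α) * α' f), ?_, ?_, ?_⟩
      · have h1 : max B'.card 1 ≤ k - 1 := by omega
        omega
      · intro f
        refine Fin.cases ?_ ?_ f
        · simpa using hScard
        · intro i; simpa using hcard' i
      · intro f
        refine Fin.cases ?_ ?_ f
        · simpa using hαpos
        · intro i
          simpa using mul_pos h1α (hpos' i)
      · intro n
        rw [Finset.sum_filter, Fin.sum_univ_succ]
        simp only [Fin.cons_zero, Fin.cons_succ]
        have htail : ∑ i : Fin F', (if n ∈ 𝒩' i then (1 - α) * α' i else 0)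
            = (1 - α) * ν n := by
          rw [← hsum' n, Finset.sum_filter, Finset.mul_sum]
          apply Finset.sum_congr rfl
          intro i _
          split_ifs <;> simp
        rw [htail, hν]
        by_cases h : n ∈ S
        · simp only [h, if_true]
          field_simp
          ring
        · simp only [h, if_false, sub_zero]
          field_simp
          ring

theorem stmt_6 (N : ℕ) (hN : 0 < N) (μ : Fin N → ℝ)
    (hμ0 : ∀ n, 0 ≤ μ n) (hμ1 : ∀ n, μ n ≤ 1)
    (t : ℕ) (ht : 0 < t) (hts : (t : ℝ) = ∑ n, μ n) :
    ∃ (F : ℕ), F ≤ N ∧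
      ∃ (𝒩 : Fin F → Finset (Fin N)) (α : Fin F → ℝ),
        (∀ f, (𝒩 f).card = t) ∧ (∀ f, 0 < α f) ∧
        ∀ n : Fin N, ∑ f ∈ Finset.univ.filter (fun f => n ∈ 𝒩 f), α f = μ n := by
  set k := (Finset.univ.filter (fun n => μ n ≠ 0 ∧ μ n ≠ 1)).card with hk
  obtain ⟨F, hF, rest⟩ := key_filling k N hN μ hμ0 hμ1 t ht hts rfl
  refine ⟨F, ?_, rest⟩
  have hkN : k ≤ N := by
    calc k ≤ (Finset.univ : Finset (Fin N)).card := Finset.card_filter_le _ _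
      _ = N := by simp
  omega
end

section
/- Let N and t be positive integers with t ≤ N, and let m ∈ ℝ^N have nonnegative entries arranged in nondecreasing order (m[1] ≤ m[2] ≤ ⋯ ≤ m[N]). Let t' = Σ_{n=1}^{N} m[n], let N' be the number of indices n with m[n] > 0, and suppose: (i) t·m[n] ≤ t' for all n; (ii) N' ≥ t+1; and (iii) exactly t−1 indices n satisfy t·m[n] = t'. Then m[N−N'+1] ≤ t'/t − m[N−t+1]; that is, the iteration of the placement algorithm completely fills the database with the smallest remaining nonzero storage (a complete fill), since min(t'/t − m[N−t+1], m[N−N'+1]) = m[N−N'+1]. -/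
theorem stmt_7 (N t : ℕ) (ht : 0 < t) (htN : t ≤ N)
    (m : Fin N → ℝ) (hm : ∀ n, 0 ≤ m n) (hmono : Monotone m)
    (t' : ℝ) (ht' : t' = ∑ n, m n)
    (N' : ℕ) (hN' : N' = (Finset.univ.filter (fun n => 0 < m n)).card)
    (hcond : ∀ n, (t : ℝ) * m n ≤ t')
    (hN'big : t + 1 ≤ N')
    (he : (Finset.univ.filter (fun n => (t : ℝ) * m n = t')).card = t - 1) :
    m ⟨N - N', by omega⟩ ≤ t' / t - m ⟨N - t, by omega⟩ := by
  have hNN : N' ≤ N := by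
    rw [hN']
    exact (Finset.card_filter_le _ _).trans (by simp)
  have htlt : t + 1 ≤ N := le_trans hN'big hNN
  have htR : (0:ℝ) < t := Nat.cast_pos.mpr ht
  set a : Fin N := ⟨N - t, by omega⟩ with ha
  set b : Fin N := ⟨N - N', by omega⟩ with hb
  -- every entry strictly above index N - t equals t'/t
  have key : ∀ k : Fin N, N - t + 1 ≤ k.val → (t:ℝ) * m k = t' := by
    intro k hk
    by_contra hne
    have hlt : (t:ℝ) * m k < t' := lt_of_le_of_ne (hcond k) hne
    have hsub : (Finset.univ.filter fun n => (t:ℝ) * m n = t') ⊆ Finset.Ioi k := by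
      intro x hx
      simp only [Finset.mem_filter, Finset.mem_univ, true_and] at hx
      rw [Finset.mem_Ioi]
      by_contra hle
      push_neg at hle
      have hmx : m x ≤ m k := hmono hle
      nlinarith
    have hcard := Finset.card_le_card hsub
    rw [he, Fin.card_Ioi] at hcard
    have hkN : k.val < N := k.isLt
    omega
  have hIoi : ∀ k ∈ Finset.Ioi a, m k = t' / t := by
    intro k hk
    rw [Finset.mem_Ioi] at hk
    have hk' : N - t + 1 ≤ k.val := hk
    have := key k hk'
    field_simp
    linarith
  have hcardIoi : (Finset.Ioi a).card = t - 1 := by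
    rw [Fin.card_Ioi]; simp only [ha]; omega
  have hsumIoi : ∑ k ∈ Finset.Ioi a, m k = ((t:ℝ) - 1) * (t' / t) := by
    rw [Finset.sum_congr rfl hIoi, Finset.sum_const, hcardIoi, nsmul_eq_mul]
    congr 1
    push_cast [Nat.cast_sub ht]
    ring
  have hsplit : ∑ k ∈ Finset.Iic a, m k + ∑ k ∈ Finset.Ioi a, m k = t' := by
    rw [ht', ← Finset.sum_union (by simp [Finset.disjoint_left])]
    congr 1
    ext x
    simp [le_or_gt]
  have hIic : ∑ k ∈ Finset.Iic a, m k = t' / t := by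
    rw [hsumIoi] at hsplit
    field_simp at hsplit ⊢
    linarith
  have hba : b < a := by
    simp only [Fin.lt_def, ha, hb]
    omega
  have hpair : m b + m a ≤ ∑ k ∈ Finset.Iic a, m k := by
    have hsub : ({b, a} : Finset (Fin N)) ⊆ Finset.Iic a := by
      intro x hx
      simp only [Finset.mem_insert, Finset.mem_singleton] at hx
      rcases hx with h | h <;> simp [h, Finset.mem_Iic, le_of_lt hba]
    calc m b + m a = ∑ k ∈ ({b, a} : Finset (Fin N)), m k := by
          rw [Finset.sum_pair (ne_of_lt hba)]
      _ ≤ ∑ k ∈ Finset.Iic a, m k :=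
          Finset.sum_le_sum_of_subset_of_nonneg hsub (fun k _ _ => hm k)
  rw [hIic] at hpair
  linarith
end

section
/- Let N and t be positive integers with t ≤ N, and let m ∈ ℝ^N have nonnegative entries arranged in nondecreasing order (m[1] ≤ m[2] ≤ ⋯ ≤ m[N]). Let t' = Σ_{n=1}^{N} m[n], let N' be the number of indices n with m[n] > 0, and let e be the number of indices n with t·m[n] = t'. Suppose t·m[n] ≤ t' for all n, N' ≥ t+1, and e ≤ t−1. Set α = min(t'/t − m[N−t+1], m[N−N'+1]), define m' ∈ ℝ^N by m'[n] = m[n] − α for n = N−N'+1 and for n ∈ {N−t+2, …, N}, and m'[n] = m[n] otherwise, and set t'' = t' − t·α. Then the number of indices n with t·m'[n] = t'' is at least e. -/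
theorem stmt_8 (N t : ℕ) (ht : 0 < t) (htN : t ≤ N)
    (m : Fin N → ℝ) (hm : ∀ n, 0 ≤ m n) (hmono : Monotone m)
    (t' : ℝ) (ht' : t' = ∑ n, m n)
    (N' : ℕ) (hN' : N' = (Finset.univ.filter (fun n => 0 < m n)).card)
    (e : ℕ) (he : e = (Finset.univ.filter (fun n => (t : ℝ) * m n = t')).card)
    (hcond : ∀ n, (t : ℝ) * m n ≤ t')
    (hN'big : t + 1 ≤ N')
    (hePF : e ≤ t - 1)
    (α : ℝ) (hα : α = min (t' / t - m ⟨N - t, by omega⟩) (m ⟨N - N', by omega⟩))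
    (m' : Fin N → ℝ)
    (hm' : ∀ n : Fin N,
      m' n = if (n : ℕ) = N - N' ∨ N - t + 1 ≤ (n : ℕ) then m n - α else m n)
    (t'' : ℝ) (ht'' : t'' = t' - t * α) :
    e ≤ (Finset.univ.filter (fun n => (t : ℝ) * m' n = t'')).card := by
  rw [he]
  apply Finset.card_le_card
  intro n hn
  simp only [Finset.mem_filter, Finset.mem_univ, true_and] at hn ⊢
  -- every k ≥ n also satisfies t * m k = t'
  have hsub : Finset.Ici n ⊆ Finset.univ.filter (fun k => (t : ℝ) * m k = t') := by
    intro k hk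
    simp only [Finset.mem_Ici] at hk
    simp only [Finset.mem_filter, Finset.mem_univ, true_and]
    have h1 : (t : ℝ) * m n ≤ (t : ℝ) * m k := by
      apply mul_le_mul_of_nonneg_left (hmono hk) (by positivity)
    exact le_antisymm (hcond k) (hn ▸ h1)
  have hcard := Finset.card_le_card hsub
  rw [Fin.card_Ici] at hcard
  have hge : N - t + 1 ≤ (n : ℕ) := by
    have := n.isLt
    omega
  rw [hm' n, if_pos (Or.inr hge), ht'']
  rw [mul_sub, hn]
end

section
/- Let N and t be positive integers with t ≤ N, and let m ∈ ℝ^N have nonnegative entries arranged in nondecreasing order (m[1] ≤ m[2] ≤ ⋯ ≤ m[N]). Let t' = Σ_{n=1}^{N} m[n] and let N' be the number of indices n with m[n] > 0. Suppose t·m[n] ≤ t' for all n, and N' ≥ 2t. Then m[N−N'+1] + m[N−t+1] ≤ t'/t; that is, the iteration of the placement algorithm is a complete fill. -/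
theorem stmt_10 (N t : ℕ) (ht : 0 < t) (htN : t ≤ N)
    (m : Fin N → ℝ) (hm : ∀ n, 0 ≤ m n) (hmono : Monotone m)
    (t' : ℝ) (ht' : t' = ∑ n, m n)
    (N' : ℕ) (hN' : N' = (Finset.univ.filter (fun n => 0 < m n)).card)
    (hcond : ∀ n, (t : ℝ) * m n ≤ t')
    (hN'big : 2 * t ≤ N') :
    m ⟨N - N', by omega⟩ + m ⟨N - t, by omega⟩ ≤ t' / t := by
  have hN'le : N' ≤ N := by
    rw [hN']
    exact (Finset.card_filter_le _ _).trans (by simp)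
  have ha : N - N' < N := by omega
  have hb : N - t < N := by omega
  have ha' : N - N' + t < N := by omega
  set a : Fin N := ⟨N - N', ha⟩ with haa
  set b : Fin N := ⟨N - t, hb⟩ with hbb
  set a' : Fin N := ⟨N - N' + t, ha'⟩ with haa'
  have key : (t : ℝ) * (m a + m b) ≤ t' := by
    have hcS : (Finset.Ico a a').card = t := by
      rw [Fin.card_Ico]; simp [haa, haa']
    have hcT : (Finset.Ici b).card = t := by
      rw [Fin.card_Ici]; simp [hbb]; omega
    have hdisj : Disjoint (Finset.Ico a a') (Finset.Ici b) := by
      rw [Finset.disjoint_left]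
      intro x hx hx'
      rw [Finset.mem_Ico] at hx
      rw [Finset.mem_Ici] at hx'
      have h1 : x.val < N - N' + t := hx.2
      have h2 : N - t ≤ x.val := hx'
      omega
    have h1 : (t : ℝ) * m a ≤ ∑ i ∈ Finset.Ico a a', m i := by
      calc (t : ℝ) * m a = (Finset.Ico a a').card • m a := by
            rw [hcS, nsmul_eq_mul]
        _ ≤ ∑ i ∈ Finset.Ico a a', m i :=
            Finset.card_nsmul_le_sum _ _ _ (fun i hi => hmono (Finset.mem_Ico.mp hi).1)
    have h2 : (t : ℝ) * m b ≤ ∑ i ∈ Finset.Ici b, m i := by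
      calc (t : ℝ) * m b = (Finset.Ici b).card • m b := by
            rw [hcT, nsmul_eq_mul]
        _ ≤ ∑ i ∈ Finset.Ici b, m i :=
            Finset.card_nsmul_le_sum _ _ _ (fun i hi => hmono (Finset.mem_Ici.mp hi))
    have h3 : ∑ i ∈ (Finset.Ico a a') ∪ (Finset.Ici b), m i ≤ ∑ i, m i :=
      Finset.sum_le_sum_of_subset_of_nonneg (Finset.subset_univ _) (fun i _ _ => hm i)
    rw [Finset.sum_union hdisj] at h3
    rw [ht', mul_add]
    linarith
  have htpos : (0 : ℝ) < t := by exact_mod_cast ht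

  rw [le_div_iff₀ htpos]
  linarith [key]
end

section
/- Let N be a positive integer and μ ∈ ℝ^N with 0 ≤ μ[n] ≤ 1 for all n. Suppose t := Σ_{n=1}^{N} μ[n] satisfies t ≥ 1 and t is not an integer. Define m₁[n] = max(μ[n] − (t − ⌊t⌋), 0) and m₂[n] = max(μ[n] − (⌈t⌉ − t), 0) for all n, and set r = (⌊t⌋(⌈t⌉ − t) − Σ_{n=1}^{N} m₁[n]) / (t − Σ_{n=1}^{N} m₁[n] − Σ_{n=1}^{N} m₂[n]). Then the denominator t − Σ_n m₁[n] − Σ_n m₂[n] is strictly positive, and 0 ≤ r < 1. -/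
theorem stmt_15 (N : ℕ) (hN : 0 < N) (μ : Fin N → ℝ)
    (hμ0 : ∀ n, 0 ≤ μ n) (hμ1 : ∀ n, μ n ≤ 1)
    (t : ℝ) (ht : t = ∑ n, μ n) (ht1 : 1 ≤ t) (htni : ¬ ∃ z : ℤ, (z : ℝ) = t)
    (m₁ m₂ : Fin N → ℝ)
    (hm₁ : ∀ n, m₁ n = max (μ n - (t - (⌊t⌋ : ℝ))) 0)
    (hm₂ : ∀ n, m₂ n = max (μ n - ((⌈t⌉ : ℝ) - t)) 0)
    (r : ℝ)
    (hr : r = ((⌊t⌋ : ℝ) * ((⌈t⌉ : ℝ) - t) - ∑ n, m₁ n) /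
      (t - ∑ n, m₁ n - ∑ n, m₂ n)) :
    0 < t - ∑ n, m₁ n - ∑ n, m₂ n ∧ 0 ≤ r ∧ r < 1 := by
  classical
  set f : ℝ := t - (⌊t⌋ : ℝ) with hf
  have hfl : (⌊t⌋ : ℝ) ≤ t := Int.floor_le t
  have hne : (⌊t⌋ : ℝ) ≠ t := fun h => htni ⟨⌊t⌋, h⟩
  have hf0 : 0 < f := by
    have := lt_of_le_of_ne hfl hne
    simp only [hf]; linarith
  have hceil : (⌈t⌉ : ℝ) = (⌊t⌋ : ℝ) + 1 := by
    have h1 : ⌈t⌉ ≤ ⌊t⌋ + 1 := Int.ceil_le_floor_add_one t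
    have h2 : t ≤ (⌈t⌉ : ℝ) := Int.le_ceil t
    have h3 : (⌊t⌋ : ℝ) < (⌈t⌉ : ℝ) := by linarith [lt_of_le_of_ne hfl hne]
    have h4 : ⌊t⌋ < ⌈t⌉ := by exact_mod_cast h3
    have : ⌈t⌉ = ⌊t⌋ + 1 := by omega
    exact_mod_cast this
  have hne' : t ≠ (⌈t⌉ : ℝ) := by
    intro h; exact htni ⟨⌈t⌉, h.symm⟩
  have hf1 : f < 1 := by
    have := lt_of_le_of_ne (Int.le_ceil t) hne'
    rw [hceil] at this; simp only [hf]; linarith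
  -- pointwise facts
  have key : ∀ n, 0 ≤ μ n - m₁ n - m₂ n ∧ (μ n - m₁ n - m₂ n = 0 → μ n = 0 ∨ μ n = 1) := by
    intro n
    have h0 := hμ0 n; have h1 := hμ1 n
    have e1 := hm₁ n; have e2 := hm₂ n
    rw [hceil] at e2
    rcases le_total (μ n - (t - (⌊t⌋ : ℝ))) 0 with h | h <;>
      rcases le_total (μ n - (((⌊t⌋ : ℝ) + 1) - t)) 0 with h' | h'
    · rw [max_eq_right h] at e1; rw [max_eq_right h'] at e2
      exact ⟨by linarith, fun hz => Or.inl (by linarith)⟩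
    · rw [max_eq_right h] at e1; rw [max_eq_left h'] at e2
      refine ⟨by simp only [hf] at hf1 ⊢; linarith, fun hz => ?_⟩
      exfalso; simp only [hf] at hf1; linarith
    · rw [max_eq_left h] at e1; rw [max_eq_right h'] at e2
      refine ⟨by simp only [hf] at hf0 ⊢; linarith, fun hz => ?_⟩
      exfalso; simp only [hf] at hf0; linarith
    · rw [max_eq_left h] at e1; rw [max_eq_left h'] at e2
      exact ⟨by linarith, fun hz => Or.inr (by linarith)⟩
  -- denominator positivity
  have hDsum : t - ∑ n, m₁ n - ∑ n, m₂ n = ∑ n, (μ n - m₁ n - m₂ n) := by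
    rw [ht, ← Finset.sum_sub_distrib, ← Finset.sum_sub_distrib]
  have hD : 0 < t - ∑ n, m₁ n - ∑ n, m₂ n := by
    rw [hDsum]
    rcases lt_or_eq_of_le (Finset.sum_nonneg (fun n _ => (key n).1)) with h | h
    · exact h
    · exfalso
      have hall : ∀ n ∈ Finset.univ, μ n - m₁ n - m₂ n = 0 :=
        (Finset.sum_eq_zero_iff_of_nonneg (fun n _ => (key n).1)).1 h.symm
      have h01 : ∀ n, μ n = 0 ∨ μ n = 1 := fun n => (key n).2 (hall n (Finset.mem_univ n))
      apply htni
      refine ⟨∑ n, (if μ n = 1 then (1 : ℤ) else 0), ?_⟩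
      push_cast
      rw [ht]
      refine Finset.sum_congr rfl fun n _ => ?_
      rcases h01 n with h' | h' <;> simp [h']
  -- numerator nonneg : ∑ m₁ ≤ ⌊t⌋ * (1 - f)
  set S : Finset (Fin N) := Finset.univ.filter (fun n => t - (⌊t⌋ : ℝ) < μ n) with hS
  have hm₁if : ∀ n, m₁ n = if t - (⌊t⌋ : ℝ) < μ n then μ n - (t - (⌊t⌋ : ℝ)) else 0 := by
    intro n; rw [hm₁ n]; split_ifs with h
    · exact max_eq_left (by linarith)
    · exact max_eq_right (by linarith)
  have hA : ∑ n, m₁ n = ∑ n ∈ S, (μ n - (t - (⌊t⌋ : ℝ))) := by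
    rw [hS, Finset.sum_filter]
    exact Finset.sum_congr rfl fun n _ => hm₁if n
  have hA2 : ∑ n, m₁ n = (∑ n ∈ S, μ n) - S.card * (t - (⌊t⌋ : ℝ)) := by
    rw [hA, Finset.sum_sub_distrib, Finset.sum_const, nsmul_eq_mul]
  have hSsub : ∑ n ∈ S, μ n ≤ t := by
    rw [ht]
    exact Finset.sum_le_sum_of_subset_of_nonneg (Finset.filter_subset _ _)
      (fun i _ _ => hμ0 i)
  have hScard1 : ∑ n ∈ S, μ n ≤ (S.card : ℝ) := by
    calc ∑ n ∈ S, μ n ≤ ∑ n ∈ S, (1 : ℝ) := Finset.sum_le_sum (fun n _ => hμ1 n)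
    _ = (S.card : ℝ) := by rw [Finset.sum_const]; simp
  have hNum : 0 ≤ (⌊t⌋ : ℝ) * ((⌈t⌉ : ℝ) - t) - ∑ n, m₁ n := by
    rw [hceil]
    rcases le_or_gt (S.card : ℤ) ⌊t⌋ with hc | hc
    · have hcR : (S.card : ℝ) ≤ (⌊t⌋ : ℝ) := by exact_mod_cast hc
      have hfR : 0 ≤ 1 - (t - (⌊t⌋ : ℝ)) := by simp only [hf] at hf1; linarith
      nlinarith [mul_nonneg (sub_nonneg.2 hcR) hfR]
    · have hcR : (⌊t⌋ : ℝ) + 1 ≤ (S.card : ℝ) := by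
        have : ⌊t⌋ + 1 ≤ (S.card : ℤ) := by omega
        exact_mod_cast this
      have hfR : (0:ℝ) ≤ t - (⌊t⌋ : ℝ) := le_of_lt hf0
      nlinarith [mul_le_mul_of_nonneg_right hcR hfR]
  -- ∑ m₂ < f * (⌊t⌋ + 1)
  have hm₂le : ∀ n, m₂ n ≤ (t - (⌊t⌋ : ℝ)) * μ n := by
    intro n
    rw [hm₂ n, hceil]
    refine max_le ?_ (mul_nonneg (le_of_lt hf0) (hμ0 n))
    have h1 := hμ1 n
    have hfR : 0 ≤ 1 - (t - (⌊t⌋ : ℝ)) := by simp only [hf] at hf1; linarith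
    nlinarith [mul_nonneg hfR (sub_nonneg.2 h1)]
  have hB : ∑ n, m₂ n ≤ (t - (⌊t⌋ : ℝ)) * t := by
    calc ∑ n, m₂ n ≤ ∑ n, (t - (⌊t⌋ : ℝ)) * μ n := Finset.sum_le_sum (fun n _ => hm₂le n)
    _ = (t - (⌊t⌋ : ℝ)) * t := by rw [← Finset.mul_sum, ← ht]
  have hBlt : ∑ n, m₂ n < (t - (⌊t⌋ : ℝ)) * ((⌊t⌋ : ℝ) + 1) := by
    have ht' : t < (⌊t⌋ : ℝ) + 1 := by simp only [hf] at hf1; linarith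
    have := mul_lt_mul_of_pos_left ht' hf0
    simp only [hf] at this
    linarith
  -- conclude
  refine ⟨hD, ?_, ?_⟩
  · rw [hr]
    exact div_nonneg hNum (le_of_lt hD)
  · rw [hr]
    rw [div_lt_one hD]
    rw [hceil]
    nlinarith
end

section
/- Let N be a positive integer and μ ∈ ℝ^N with 0 ≤ μ[n] ≤ 1 for all n. Suppose t := Σ_{n=1}^{N} μ[n] satisfies t ≥ 1 and t is not an integer. Then Σ_{n=1}^{N} max(μ[n] − (t − ⌊t⌋), 0) ≤ ⌊t⌋ · (⌈t⌉ − t). -/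
theorem stmt_16 (N : ℕ) (hN : 0 < N) (μ : Fin N → ℝ)
    (hμ0 : ∀ n, 0 ≤ μ n) (hμ1 : ∀ n, μ n ≤ 1)
    (t : ℝ) (ht : t = ∑ n, μ n) (ht1 : 1 ≤ t) (htni : ¬ ∃ z : ℤ, (z : ℝ) = t) :
    ∑ n, max (μ n - (t - (⌊t⌋ : ℝ))) 0 ≤ (⌊t⌋ : ℝ) * ((⌈t⌉ : ℝ) - t) := by
  set f : ℝ := t - (⌊t⌋ : ℝ) with hf
  have hfract : f = Int.fract t := rfl
  have hfne : Int.fract t ≠ 0 := by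
    intro h
    exact htni ⟨⌊t⌋, by have := Int.fract_add_floor t; rw [h] at this; simpa using this⟩
  have hf0 : 0 < f := by
    rw [hfract]; exact lt_of_le_of_ne (Int.fract_nonneg t) (Ne.symm hfne)
  have hf1 : f < 1 := by rw [hfract]; exact Int.fract_lt_one t
  have hceil : (⌈t⌉ : ℝ) - t = 1 - f := by
    rw [Int.ceil_sub_self_eq hfne, hfract]
  have hk1 : (1 : ℝ) ≤ (⌊t⌋ : ℝ) := by
    have : (1 : ℤ) ≤ ⌊t⌋ := Int.le_floor.mpr (by exact_mod_cast ht1)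
    exact_mod_cast this
  rw [hceil]
  set S := Finset.univ.filter (fun n => f < μ n) with hS
  have hsum : ∑ n, max (μ n - f) 0 = ∑ n ∈ S, (μ n - f) := by
    rw [Finset.sum_filter]
    apply Finset.sum_congr rfl
    intro n _
    by_cases h : f < μ n
    · simp [h, max_eq_left (le_of_lt (sub_pos.mpr h))]
    · simp [h, max_eq_right (sub_nonpos.mpr (not_lt.mp h))]
  rw [hsum]
  by_cases hcard : (S.card : ℝ) ≤ (⌊t⌋ : ℝ)
  · calc ∑ n ∈ S, (μ n - f) ≤ ∑ _n ∈ S, (1 - f) := by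
          apply Finset.sum_le_sum; intro n _; linarith [hμ1 n]
      _ = (S.card : ℝ) * (1 - f) := by rw [Finset.sum_const, nsmul_eq_mul]
      _ ≤ (⌊t⌋ : ℝ) * (1 - f) := by nlinarith
  · push_neg at hcard
    have hcard' : (⌊t⌋ : ℝ) + 1 ≤ (S.card : ℝ) := by
      have : ⌊t⌋ < (S.card : ℤ) := by exact_mod_cast hcard
      exact_mod_cast this
    have hsub : ∑ n ∈ S, μ n ≤ t := by
      rw [ht]
      exact Finset.sum_le_sum_of_subset_of_nonneg (Finset.filter_subset _ _)
        (fun n _ _ => hμ0 n)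
    have : ∑ n ∈ S, (μ n - f) = (∑ n ∈ S, μ n) - (S.card : ℝ) * f := by
      rw [Finset.sum_sub_distrib, Finset.sum_const, nsmul_eq_mul]
    rw [this]
    have ht' : t = (⌊t⌋ : ℝ) + f := by rw [hf]; ring
    nlinarith
end

section
/- Let N be a positive integer and μ ∈ ℝ^N with 0 ≤ μ[n] ≤ 1 for all n. Suppose t := Σ_{n=1}^{N} μ[n] satisfies t ≥ 1 and t is not an integer. Then Σ_{n=1}^{N} ( max(μ[n] − (t − ⌊t⌋), 0) + max(μ[n] − (⌈t⌉ − t), 0) ) < t, with strict inequality. -/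
lemma aux_le (a b x : ℝ) (ha : 0 < a) (hb : 0 < b) (hab : a + b = 1)
    (hx0 : 0 ≤ x) (hx1 : x ≤ 1) : max (x - a) 0 + max (x - b) 0 ≤ x := by
  rcases le_or_gt x a with h1 | h1 <;> rcases le_or_gt x b with h2 | h2
  · rw [max_eq_right (by linarith), max_eq_right (by linarith)]; linarith
  · rw [max_eq_right (by linarith), max_eq_left (by linarith)]; linarith
  · rw [max_eq_left (by linarith), max_eq_right (by linarith)]; linarith
  · rw [max_eq_left (by linarith), max_eq_left (by linarith)]; linarith

lemma aux_lt (a b x : ℝ) (ha : 0 < a) (hb : 0 < b) (hab : a + b = 1)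
    (hx0 : 0 < x) (hx1 : x < 1) : max (x - a) 0 + max (x - b) 0 < x := by
  rcases le_or_gt x a with h1 | h1 <;> rcases le_or_gt x b with h2 | h2
  · rw [max_eq_right (by linarith), max_eq_right (by linarith)]; linarith
  · rw [max_eq_right (by linarith), max_eq_left (by linarith)]; linarith
  · rw [max_eq_left (by linarith), max_eq_right (by linarith)]; linarith
  · rw [max_eq_left (by linarith), max_eq_left (by linarith)]; linarith

theorem stmt_17 (N : ℕ) (hN : 0 < N) (μ : Fin N → ℝ)
    (hμ0 : ∀ n, 0 ≤ μ n) (hμ1 : ∀ n, μ n ≤ 1)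
    (t : ℝ) (ht : t = ∑ n, μ n) (ht1 : 1 ≤ t) (htni : ¬ ∃ z : ℤ, (z : ℝ) = t) :
    ∑ n, (max (μ n - (t - (⌊t⌋ : ℝ))) 0 + max (μ n - ((⌈t⌉ : ℝ) - t)) 0) < t := by
  have hfl : (⌊t⌋ : ℝ) < t := lt_of_le_of_ne (Int.floor_le t) (fun h => htni ⟨⌊t⌋, h⟩)
  have hcl : t < (⌈t⌉ : ℝ) := lt_of_le_of_ne (Int.le_ceil t) (fun h => htni ⟨⌈t⌉, h.symm⟩)
  have hle : (⌈t⌉ : ℝ) ≤ (⌊t⌋ : ℝ) + 1 := by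
    exact_mod_cast Int.ceil_le_floor_add_one t
  have hlt : (⌊t⌋ : ℝ) < (⌈t⌉ : ℝ) := lt_trans hfl hcl
  have hlt' : (⌊t⌋ : ℤ) < ⌈t⌉ := by exact_mod_cast hlt
  have heq : (⌈t⌉ : ℝ) = (⌊t⌋ : ℝ) + 1 := by
    have : (⌊t⌋ : ℤ) + 1 ≤ ⌈t⌉ := hlt'
    have h2 : (⌈t⌉ : ℤ) ≤ ⌊t⌋ + 1 := Int.ceil_le_floor_add_one t
    have : (⌈t⌉ : ℤ) = ⌊t⌋ + 1 := le_antisymm h2 this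
    exact_mod_cast this
  have ha : 0 < t - (⌊t⌋ : ℝ) := by linarith
  have hb : 0 < (⌈t⌉ : ℝ) - t := by linarith
  have hab : (t - (⌊t⌋ : ℝ)) + ((⌈t⌉ : ℝ) - t) = 1 := by linarith
  have hex : ∃ n, μ n ≠ 0 ∧ μ n ≠ 1 := by
    by_contra h
    push_neg at h
    apply htni
    refine ⟨∑ n, if μ n = 0 then 0 else 1, ?_⟩
    push_cast
    rw [ht]
    refine Finset.sum_congr rfl fun n _ => ?_
    by_cases hn : μ n = 0
    · simp [hn]
    · simp [hn, h n hn]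
  obtain ⟨n0, hn0, hn1⟩ := hex
  conv_rhs => rw [ht]
  refine Finset.sum_lt_sum (fun i _ => aux_le _ _ _ ha hb hab (hμ0 i) (hμ1 i))
    ⟨n0, Finset.mem_univ n0, aux_lt _ _ _ ha hb hab (lt_of_le_of_ne (hμ0 n0) (Ne.symm hn0))
      (lt_of_le_of_ne (hμ1 n0) hn1)⟩
end

section
/- Let N be a positive integer and μ ∈ ℝ^N with 0 ≤ μ[n] ≤ 1 for all n. Suppose t := Σ_{n=1}^{N} μ[n] satisfies t ≥ 1 and t is not an integer. Define m₁[n] = max(μ[n] − (t − ⌊t⌋), 0), m₂[n] = max(μ[n] − (⌈t⌉ − t), 0), r = (⌊t⌋(⌈t⌉ − t) − Σ_n m₁[n]) / (t − Σ_n m₁[n] − Σ_n m₂[n]), and the vectors μ^(⌊t⌋) = m₁ + r·(μ − m₁ − m₂) and μ^(⌈t⌉) = m₂ + (1−r)·(μ − m₁ − m₂). Then: (i) μ^(⌊t⌋) + μ^(⌈t⌉) = μ; (ii) all entries of μ^(⌊t⌋) and μ^(⌈t⌉) are nonnegative; (iii) Σ_{n=1}^{N} μ^(⌊t⌋)[n]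 = ⌊t⌋(⌈t⌉ − t) and Σ_{n=1}^{N} μ^(⌈t⌉)[n] = ⌈t⌉(t − ⌊t⌋); and (iv) for every n, μ^(⌊t⌋)[n] ≤ ⌈t⌉ − t and μ^(⌈t⌉)[n] ≤ t − ⌊t⌋. Consequently a (μ^(⌊t⌋), ⌊t⌋)-filling-problem solution and a (μ^(⌈t⌉), ⌈t⌉)-filling-problem solution both exist. -/
namespace Stmt18Aux

variable {N : ℕ}

def Sol (A : Finset (Fin N)) (τ : ℕ) (m : Fin N → ℝ) (c : ℝ)
    (α : Finset (Fin N) → ℝ) : Prop :=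
  (∀ S, 0 ≤ α S) ∧ (∀ S, α S ≠ 0 → S ∈ A.powersetCard τ) ∧
  (∀ n ∈ A, ∑ S ∈ (A.powersetCard τ).filter (fun S => n ∈ S), α S = m n) ∧
  (∑ S ∈ A.powersetCard τ, α S = c)

lemma sol_tau_zero (A : Finset (Fin N)) (m : Fin N → ℝ) (c : ℝ) (hc : 0 ≤ c)
    (hm : ∀ n ∈ A, m n = 0) :
    Sol A 0 m c (fun S => if S = (∅ : Finset (Fin N)) then c else 0) := by
  have hpc : A.powersetCard 0 = {∅} := Finset.powersetCard_zero A
  refine ⟨?_, ?_, ?_, ?_⟩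
  · intro S; dsimp only; split <;> simp [hc]
  · intro S hS
    by_cases h : S = ∅
    · subst h; rw [hpc]; simp
    · simp [h] at hS
  · intro n hn
    rw [hm n hn]
    apply Finset.sum_eq_zero
    intro S hS
    rw [hpc] at hS
    simp only [Finset.mem_filter, Finset.mem_singleton] at hS
    rcases hS with ⟨rfl, h2⟩
    simp at h2
  · rw [hpc]; simp

lemma sol_all_zero (A : Finset (Fin N)) (τ : ℕ) (m : Fin N → ℝ)
    (hm : ∀ n ∈ A, m n = 0) :
    Sol A τ m 0 (fun _ => 0) := by
  refine ⟨fun S => le_refl 0, fun S hS => absurd rfl hS, ?_, ?_⟩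
  · intro n hn; rw [hm n hn]; exact Finset.sum_const_zero
  · exact Finset.sum_const_zero

lemma zero_step {A : Finset (Fin N)} {n₀ : Fin N} (hn₀ : n₀ ∈ A) {τ : ℕ}
    {m : Fin N → ℝ} {c : ℝ} (hm0 : m n₀ = 0) {α : Finset (Fin N) → ℝ}
    (h : Sol (A.erase n₀) τ m c α) : Sol A τ m c α := by
  obtain ⟨h1, h2, h3, h4⟩ := h
  have hsub : (A.erase n₀).powersetCard τ ⊆ A.powersetCard τ :=
    Finset.powersetCard_mono (A.erase_subset n₀)
  refine ⟨h1, fun S hS => hsub (h2 S hS), ?_, ?_⟩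
  · intro n hn
    by_cases hne : n = n₀
    · subst hne
      rw [hm0]
      apply Finset.sum_eq_zero
      intro S hS
      simp only [Finset.mem_filter] at hS
      by_contra hz
      have h2S := h2 S hz
      rw [Finset.mem_powersetCard] at h2S
      exact absurd (h2S.1 hS.2) (Finset.notMem_erase _ _)
    · have hn' : n ∈ A.erase n₀ := Finset.mem_erase.mpr ⟨hne, hn⟩
      rw [← h3 n hn']
      refine (Finset.sum_subset (Finset.filter_subset_filter _ hsub) ?_).symm
      intro S hS hS'
      by_contra hz
      have h2S := h2 S hz
      simp only [Finset.mem_filter] at hS hS'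
      exact hS' ⟨h2S, hS.2⟩
  · rw [← h4]
    refine (Finset.sum_subset hsub ?_).symm
    intro S hS hS'
    by_contra hz
    exact hS' (h2 S hz)


lemma sum_insert_erase {A : Finset (Fin N)} {n₁ : Fin N} (hn₁ : n₁ ∈ A) {τ : ℕ}
    (f : Finset (Fin N) → ℝ) (p q : Finset (Fin N) → Prop)
    [DecidablePred p] [DecidablePred q]
    (hpq : ∀ S, n₁ ∉ S → (p (insert n₁ S) ↔ q S)) (hp : ∀ S, p S → n₁ ∈ S) :
    ∑ S ∈ (A.powersetCard (τ + 1)).filter p, f (S.erase n₁)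
      = ∑ T ∈ ((A.erase n₁).powersetCard τ).filter q, f T := by
  refine Finset.sum_nbij' (fun S => S.erase n₁) (fun T => insert n₁ T) ?_ ?_ ?_ ?_ ?_
  · intro S hS
    simp only [Finset.mem_filter, Finset.mem_powersetCard] at hS ⊢
    obtain ⟨⟨hSA, hScard⟩, hpS⟩ := hS
    have hn₁S : n₁ ∈ S := hp S hpS
    refine ⟨⟨Finset.erase_subset_erase n₁ hSA, ?_⟩, ?_⟩
    · rw [Finset.card_erase_of_mem hn₁S, hScard]; omega
    · have := hpq (S.erase n₁) (Finset.notMem_erase n₁ S)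
      rw [Finset.insert_erase hn₁S] at this
      exact this.mp hpS
  · intro T hT
    simp only [Finset.mem_filter, Finset.mem_powersetCard] at hT ⊢
    obtain ⟨⟨hTA, hTcard⟩, hqT⟩ := hT
    have hn₁T : n₁ ∉ T := fun h => Finset.notMem_erase n₁ A (hTA h)
    refine ⟨⟨?_, ?_⟩, (hpq T hn₁T).mpr hqT⟩
    · exact Finset.insert_subset hn₁ (hTA.trans (A.erase_subset n₁))
    · rw [Finset.card_insert_of_notMem hn₁T, hTcard]
  · intro S hS
    simp only [Finset.mem_filter] at hS
    exact Finset.insert_erase (hp S hS.2)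
  · intro T hT
    simp only [Finset.mem_filter, Finset.mem_powersetCard] at hT
    have hn₁T : n₁ ∉ T := fun h => Finset.notMem_erase n₁ A (hT.1.1 h)
    exact Finset.erase_insert hn₁T
  · intro S _; rfl

lemma cap_step {A : Finset (Fin N)} {n₁ : Fin N} (hn₁ : n₁ ∈ A) {τ : ℕ}
    {m : Fin N → ℝ} {c : ℝ} (hmc : m n₁ = c) {β : Finset (Fin N) → ℝ}
    (h : Sol (A.erase n₁) τ m c β) :
    Sol A (τ + 1) m c (fun S => if n₁ ∈ S then β (S.erase n₁) else 0) := by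
  obtain ⟨h1, h2, h3, h4⟩ := h
  refine ⟨?_, ?_, ?_, ?_⟩
  · intro S; dsimp only; split
    · exact h1 _
    · exact le_refl 0
  · intro S hS
    dsimp only at hS
    by_cases hmem : n₁ ∈ S
    · rw [if_pos hmem] at hS
      have h2S := h2 _ hS
      rw [Finset.mem_powersetCard] at h2S ⊢
      constructor
      · intro x hx
        by_cases hx1 : x = n₁
        · subst hx1; exact hn₁
        · exact (A.erase_subset n₁) (h2S.1 (Finset.mem_erase.mpr ⟨hx1, hx⟩))
      · rw [← Finset.card_erase_add_one hmem, h2S.2]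
    · rw [if_neg hmem] at hS; exact absurd rfl hS
  · intro n hn
    by_cases hne : n = n₁
    · subst hne
      have key : ∑ S ∈ (A.powersetCard (τ + 1)).filter (fun S => n ∈ S),
          (if n ∈ S then β (S.erase n) else 0)
          = ∑ S ∈ (A.powersetCard (τ + 1)).filter (fun S => n ∈ S), β (S.erase n) := by
        apply Finset.sum_congr rfl
        intro S hS
        simp only [Finset.mem_filter] at hS
        rw [if_pos hS.2]
      rw [key, hmc, ← h4]
      have : ((A.erase n).powersetCard τ).filter (fun _ => True)
          = (A.erase n).powersetCard τ := Finset.filter_true_of_mem (fun _ _ => trivial)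
      rw [← this]
      exact sum_insert_erase hn β (fun S => n ∈ S) (fun _ => True)
        (fun S _ => by simp) (fun S hS => hS)
    · have hn' : n ∈ A.erase n₁ := Finset.mem_erase.mpr ⟨hne, hn⟩
      rw [← h3 n hn']
      have key : ∑ S ∈ (A.powersetCard (τ + 1)).filter (fun S => n ∈ S),
          (if n₁ ∈ S then β (S.erase n₁) else 0)
          = ∑ S ∈ (A.powersetCard (τ + 1)).filter (fun S => n ∈ S ∧ n₁ ∈ S),
            β (S.erase n₁) := by
        rw [Finset.sum_filter, Finset.sum_filter]
        apply Finset.sum_congr rfl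
        intro S _
        by_cases ha : n ∈ S <;> by_cases hb : n₁ ∈ S <;> simp [ha, hb]
      rw [key]
      exact sum_insert_erase hn₁ β (fun S => n ∈ S ∧ n₁ ∈ S) (fun S => n ∈ S)
        (fun S hS => by simp [Finset.mem_insert, hne])
        (fun S hS => hS.2)
  · have key : ∑ S ∈ A.powersetCard (τ + 1), (if n₁ ∈ S then β (S.erase n₁) else 0)
        = ∑ S ∈ (A.powersetCard (τ + 1)).filter (fun S => n₁ ∈ S), β (S.erase n₁) := by
      rw [Finset.sum_filter]
    rw [key, ← h4]
    have : ((A.erase n₁).powersetCard τ).filter (fun _ => True)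
        = (A.erase n₁).powersetCard τ := Finset.filter_true_of_mem (fun _ _ => trivial)
    rw [← this]
    exact sum_insert_erase hn₁ β (fun S => n₁ ∈ S) (fun _ => True)
      (fun S _ => by simp) (fun S hS => hS)

lemma add_step {A : Finset (Fin N)} {τ : ℕ} {m : Fin N → ℝ} {c ε : ℝ}
    (hε : 0 ≤ ε) {S₀ : Finset (Fin N)} (hS₀ : S₀ ∈ A.powersetCard τ)
    {α : Finset (Fin N) → ℝ}
    (h : Sol A τ m (c - ε) α) :
    Sol A τ (fun n => m n + if n ∈ S₀ then ε else 0) c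
      (fun S => α S + if S = S₀ then ε else 0) := by
  obtain ⟨h1, h2, h3, h4⟩ := h
  refine ⟨?_, ?_, ?_, ?_⟩
  · intro S; dsimp only
    have := h1 S
    split <;> linarith
  · intro S hS
    dsimp only at hS
    by_cases hSS : S = S₀
    · subst hSS; exact hS₀
    · rw [if_neg hSS, add_zero] at hS
      exact h2 S hS
  · intro n hn
    rw [Finset.sum_add_distrib, h3 n hn, Finset.sum_ite_eq' _ S₀ (fun _ => ε)]
    dsimp only
    congr 1
    simp only [Finset.mem_filter, hS₀, true_and]
  · rw [Finset.sum_add_distrib, h4, Finset.sum_ite_eq' _ S₀ (fun _ => ε),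
      if_pos hS₀]
    ring


lemma fill : ∀ (k : ℕ) (A : Finset (Fin N)) (τ : ℕ) (m : Fin N → ℝ) (c : ℝ),
    A.card ≤ k → 0 ≤ c → (∀ n ∈ A, 0 ≤ m n) → (∀ n ∈ A, m n ≤ c) →
    (∑ n ∈ A, m n) = τ * c → τ ≤ A.card →
    ∃ α, Sol A τ m c α := by
  intro k
  induction k with
  | zero =>
    intro A τ m c hcard hc h0 h1 hsum hτ
    have hA : A = ∅ := Finset.card_eq_zero.mp (Nat.le_zero.mp hcard)
    have hτ0 : τ = 0 := by rw [hA] at hτ; simpa using hτ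
    subst hτ0
    exact ⟨_, sol_tau_zero A m c hc (by rw [hA]; intro n hn; simp at hn)⟩
  | succ k ih =>
    intro A τ m c hcard hc h0 h1 hsum hτ
    rcases τ with _ | τ'
    · -- τ = 0
      have hm0 : ∀ n ∈ A, m n = 0 := by
        rw [(by push_cast; ring : ((0:ℕ):ℝ) * c = 0)] at hsum
        exact (Finset.sum_eq_zero_iff_of_nonneg h0).mp hsum
      exact ⟨_, sol_tau_zero A m c hc hm0⟩
    rcases eq_or_lt_of_le hc with hc0 | hcpos
    · -- c = 0
      have hm0 : ∀ n ∈ A, m n = 0 := fun n hn => le_antisymm (by rw [hc0]; exact h1 n hn) (h0 n hn)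
      exact ⟨_, hc0 ▸ sol_all_zero A (τ' + 1) m hm0⟩
    by_cases hzero : ∃ n₀ ∈ A, m n₀ = 0
    · obtain ⟨n₀, hn₀A, hmz⟩ := hzero
      have hcardE : (A.erase n₀).card ≤ k := by
        rw [Finset.card_erase_of_mem hn₀A]; omega
      have hsumE : (∑ n ∈ A.erase n₀, m n) = ((τ' + 1 : ℕ) : ℝ) * c := by
        rw [Finset.sum_erase_eq_sub hn₀A, hmz, sub_zero, hsum]
      have hτE : τ' + 1 ≤ (A.erase n₀).card := by
        have hle : ((τ' + 1 : ℕ) : ℝ) * c ≤ ((A.erase n₀).card : ℝ) * c := by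
          rw [← hsumE]
          calc ∑ n ∈ A.erase n₀, m n
              ≤ (A.erase n₀).card • c :=
                Finset.sum_le_card_nsmul _ _ c (fun n hn => h1 n (A.erase_subset n₀ hn))
            _ = ((A.erase n₀).card : ℝ) * c := by rw [nsmul_eq_mul]
        have := le_of_mul_le_mul_right hle hcpos
        exact_mod_cast this
      obtain ⟨α, hα⟩ := ih (A.erase n₀) (τ' + 1) m c hcardE hc
        (fun n hn => h0 n (A.erase_subset n₀ hn))
        (fun n hn => h1 n (A.erase_subset n₀ hn)) hsumE hτE
      exact ⟨α, zero_step hn₀A hmz hα⟩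
    by_cases hcap : ∃ n₁ ∈ A, m n₁ = c
    · obtain ⟨n₁, hn₁A, hmc⟩ := hcap
      have hcardE : (A.erase n₁).card ≤ k := by
        rw [Finset.card_erase_of_mem hn₁A]; omega
      have hsumE : (∑ n ∈ A.erase n₁, m n) = ((τ' : ℕ) : ℝ) * c := by
        rw [Finset.sum_erase_eq_sub hn₁A, hmc, hsum]; push_cast; ring
      have hτE : τ' ≤ (A.erase n₁).card := by
        rw [Finset.card_erase_of_mem hn₁A]; omega
      obtain ⟨β, hβ⟩ := ih (A.erase n₁) τ' m c hcardE hc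
        (fun n hn => h0 n (A.erase_subset n₁ hn))
        (fun n hn => h1 n (A.erase_subset n₁ hn)) hsumE hτE
      exact ⟨_, cap_step hn₁A hmc hβ⟩
    -- fractional case: all 0 < m n < c on A
    push_neg at hzero hcap
    have hfrac : ∀ n ∈ A, 0 < m n ∧ m n < c := fun n hn =>
      ⟨lt_of_le_of_ne (h0 n hn) (fun h => hzero n hn h.symm),
       lt_of_le_of_ne (h1 n hn) (hcap n hn)⟩
    have hAne : A.Nonempty := Finset.card_pos.mp (by omega)
    have hlt : τ' + 1 < A.card := by
      have hstrict : ((τ' + 1 : ℕ) : ℝ) * c < (A.card : ℝ) * c := by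
        rw [← hsum]
        calc ∑ n ∈ A, m n < ∑ n ∈ A, c :=
              Finset.sum_lt_sum_of_nonempty hAne (fun n hn => (hfrac n hn).2)
          _ = (A.card : ℝ) * c := by rw [Finset.sum_const, nsmul_eq_mul]
      exact_mod_cast lt_of_mul_lt_mul_right hstrict hc
    obtain ⟨S₀, hS₀A, hS₀card⟩ := Finset.exists_subset_card_eq (le_of_lt hlt : τ' + 1 ≤ A.card)
    have hS₀ne : S₀.Nonempty := Finset.card_pos.mp (by rw [hS₀card]; omega)
    have hcompne : (A \ S₀).Nonempty := by
      rw [← Finset.card_pos, Finset.card_sdiff_of_subset hS₀A, hS₀card]; omega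
    obtain ⟨n₀, hn₀S, hmin⟩ := S₀.exists_min_image m hS₀ne
    obtain ⟨n₁, hn₁C, hmax⟩ := (A \ S₀).exists_max_image m hcompne
    have hn₀A : n₀ ∈ A := hS₀A hn₀S
    have hn₁A : n₁ ∈ A := (Finset.mem_sdiff.mp hn₁C).1
    have hn₁S : n₁ ∉ S₀ := (Finset.mem_sdiff.mp hn₁C).2
    set ε := min (m n₀) (c - m n₁) with hεdef
    have hε0 : 0 < ε := lt_min (hfrac n₀ hn₀A).1 (by linarith [(hfrac n₁ hn₁A).2])
    have hεm : ε ≤ m n₀ := min_le_left _ _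
    have hεc : ε ≤ c - m n₁ := min_le_right _ _
    set m' := fun n => m n - if n ∈ S₀ then ε else 0 with hm'def
    have hc' : 0 ≤ c - ε := by linarith [(hfrac n₀ hn₀A).2]
    have h0' : ∀ n ∈ A, 0 ≤ m' n := by
      intro n hn; simp only [hm'def]
      split
      · next hmem => linarith [hmin n hmem]
      · linarith [(hfrac n hn).1]
    have h1' : ∀ n ∈ A, m' n ≤ c - ε := by
      intro n hn; simp only [hm'def]
      split
      · next hmem => linarith [(hfrac n hn).2]
      · next hmem =>
        have : n ∈ A \ S₀ := Finset.mem_sdiff.mpr ⟨hn, hmem⟩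
        linarith [hmax n this]
    have hsum' : (∑ n ∈ A, m' n) = ((τ' + 1 : ℕ) : ℝ) * (c - ε) := by
      simp only [hm'def]
      rw [Finset.sum_sub_distrib, hsum, Finset.sum_ite_mem,
        Finset.inter_eq_right.mpr hS₀A, Finset.sum_const, hS₀card, nsmul_eq_mul]
      push_cast; ring
    have hS₀mem : S₀ ∈ A.powersetCard (τ' + 1) :=
      Finset.mem_powersetCard.mpr ⟨hS₀A, hS₀card⟩
    have hm'eq : (fun n => m' n + if n ∈ S₀ then ε else 0) = m := by
      funext n; simp only [hm'def]; ring
    rcases min_cases (m n₀) (c - m n₁) with ⟨hmineq, _⟩ | ⟨hmineq, _⟩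
    · -- ε = m n₀ : coordinate n₀ of m' hits zero
      have hm'z : m' n₀ = 0 := by simp only [hm'def, if_pos hn₀S]; rw [hεdef, hmineq]; ring
      have hcardE : (A.erase n₀).card ≤ k := by rw [Finset.card_erase_of_mem hn₀A]; omega
      have hsumE : (∑ n ∈ A.erase n₀, m' n) = ((τ' + 1 : ℕ) : ℝ) * (c - ε) := by
        rw [Finset.sum_erase_eq_sub hn₀A, hm'z, sub_zero, hsum']
      have hτE : τ' + 1 ≤ (A.erase n₀).card := by
        rw [Finset.card_erase_of_mem hn₀A]; omega
      obtain ⟨α, hα⟩ := ih (A.erase n₀) (τ' + 1) m' (c - ε) hcardE hc'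
        (fun n hn => h0' n (A.erase_subset n₀ hn))
        (fun n hn => h1' n (A.erase_subset n₀ hn)) hsumE hτE
      have hA' : Sol A (τ' + 1) m' (c - ε) α := zero_step hn₀A hm'z hα
      have := add_step (le_of_lt hε0) hS₀mem hA'
      rw [hm'eq] at this
      exact ⟨_, this⟩
    · -- ε = c - m n₁ : coordinate n₁ of m' hits the cap c - ε
      have hm'c : m' n₁ = c - ε := by
        simp only [hm'def, if_neg hn₁S]; rw [hεdef, hmineq]; ring
      have hcardE : (A.erase n₁).card ≤ k := by rw [Finset.card_erase_of_mem hn₁A]; omega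
      have hsumE : (∑ n ∈ A.erase n₁, m' n) = ((τ' : ℕ) : ℝ) * (c - ε) := by
        rw [Finset.sum_erase_eq_sub hn₁A, hm'c, hsum']; push_cast; ring
      have hτE : τ' ≤ (A.erase n₁).card := by
        rw [Finset.card_erase_of_mem hn₁A]; omega
      obtain ⟨β, hβ⟩ := ih (A.erase n₁) τ' m' (c - ε) hcardE hc'
        (fun n hn => h0' n (A.erase_subset n₁ hn))
        (fun n hn => h1' n (A.erase_subset n₁ hn)) hsumE hτE
      have hA' : Sol A (τ' + 1) m' (c - ε) _ := cap_step hn₁A hm'c hβ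
      have := add_step (le_of_lt hε0) hS₀mem hA'
      rw [hm'eq] at this
      exact ⟨_, this⟩


end Stmt18Aux

theorem stmt_18 (N : ℕ) (hN : 0 < N) (μ : Fin N → ℝ)
    (hμ0 : ∀ n, 0 ≤ μ n) (hμ1 : ∀ n, μ n ≤ 1)
    (t : ℝ) (ht : t = ∑ n, μ n) (ht1 : 1 ≤ t) (htni : ¬ ∃ z : ℤ, (z : ℝ) = t)
    (m₁ m₂ : Fin N → ℝ)
    (hm₁ : ∀ n, m₁ n = max (μ n - (t - (⌊t⌋ : ℝ))) 0)
    (hm₂ : ∀ n, m₂ n = max (μ n - ((⌈t⌉ : ℝ) - t)) 0)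
    (r : ℝ)
    (hr : r = ((⌊t⌋ : ℝ) * ((⌈t⌉ : ℝ) - t) - ∑ n, m₁ n) /
      (t - ∑ n, m₁ n - ∑ n, m₂ n))
    (μlo μhi : Fin N → ℝ)
    (hμlo : ∀ n, μlo n = m₁ n + r * (μ n - m₁ n - m₂ n))
    (hμhi : ∀ n, μhi n = m₂ n + (1 - r) * (μ n - m₁ n - m₂ n)) :
    (∀ n, μlo n + μhi n = μ n) ∧
    (∀ n, 0 ≤ μlo n) ∧ (∀ n, 0 ≤ μhi n) ∧
    (∑ n, μlo n = (⌊t⌋ : ℝ) * ((⌈t⌉ : ℝ) - t)) ∧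
    (∑ n, μhi n = (⌈t⌉ : ℝ) * (t - (⌊t⌋ : ℝ))) ∧
    (∀ n, μlo n ≤ (⌈t⌉ : ℝ) - t) ∧
    (∀ n, μhi n ≤ t - (⌊t⌋ : ℝ)) ∧
    (∃ α : Finset (Fin N) → ℝ, (∀ S, 0 ≤ α S) ∧
      ∀ n : Fin N,
        ∑ S ∈ (Finset.univ.powersetCard ⌊t⌋.toNat).filter (fun S => n ∈ S), α S = μlo n) ∧
    (∃ β : Finset (Fin N) → ℝ, (∀ S, 0 ≤ β S) ∧
      ∀ n : Fin N,
        ∑ S ∈ (Finset.univ.powersetCard ⌈t⌉.toNat).filter (fun S => n ∈ S), β S = μhi n) := by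
  classical
  have hne : ((⌊t⌋ : ℤ) : ℝ) ≠ t := fun h => htni ⟨⌊t⌋, h⟩
  have hfl : ((⌊t⌋ : ℤ) : ℝ) < t := lt_of_le_of_ne (Int.floor_le t) hne
  have hflub : t < ((⌊t⌋ : ℤ) : ℝ) + 1 := Int.lt_floor_add_one t
  have hceil : ⌈t⌉ = ⌊t⌋ + 1 :=
    Int.ceil_eq_iff.mpr ⟨by push_cast; linarith, by push_cast; linarith⟩
  have hco : ((⌈t⌉ : ℤ) : ℝ) = ((⌊t⌋ : ℤ) : ℝ) + 1 := by rw [hceil]; push_cast; ring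
  set F := ((⌊t⌋ : ℤ) : ℝ) with hF
  set fr := t - F with hfr
  have hfr0 : 0 < fr := by rw [hfr]; linarith
  have hfr1 : fr < 1 := by rw [hfr]; linarith
  have htfr : t = F + fr := by rw [hfr]; ring
  have hfl1 : (1 : ℤ) ≤ ⌊t⌋ := Int.le_floor.mpr (by exact_mod_cast ht1)
  have hF1 : (1 : ℝ) ≤ F := by rw [hF]; exact_mod_cast hfl1
  have htN : t ≤ N := by
    rw [ht]
    calc ∑ n, μ n ≤ ∑ _n : Fin N, (1 : ℝ) := Finset.sum_le_sum (fun n _ => hμ1 n)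
      _ = N := by simp
  have hcoeq : ((⌈t⌉ : ℤ) : ℝ) - t = 1 - fr := by rw [hco]; rw [hfr]; ring
  have hm₂' : ∀ n, m₂ n = max (μ n - (1 - fr)) 0 := by
    intro n; rw [hm₂ n, hcoeq]
  -- nonnegativity of m₁, m₂, and of the leftover g
  have hm₁0 : ∀ n, 0 ≤ m₁ n := fun n => by rw [hm₁ n]; exact le_max_right _ _
  have hm₂0 : ∀ n, 0 ≤ m₂ n := fun n => by rw [hm₂' n]; exact le_max_right _ _
  have hg : ∀ n, 0 ≤ μ n - m₁ n - m₂ n := by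
    intro n
    have h0 := hμ0 n; have h1 := hμ1 n
    rw [hm₁ n, hm₂' n]
    rcases max_cases (μ n - fr) 0 with ⟨e1, he1⟩ | ⟨e1, he1⟩ <;>
      rcases max_cases (μ n - (1 - fr)) 0 with ⟨e2, he2⟩ | ⟨e2, he2⟩ <;>
      rw [e1, e2] <;> linarith
  -- m₁ bound
  have hm₁ite : ∀ n, m₁ n = if fr < μ n then μ n - fr else 0 := by
    intro n; rw [hm₁ n]
    split
    · next h => exact max_eq_left (by linarith)
    · next h => push_neg at h; exact max_eq_right (by linarith)
  have hs₁le : ∑ n, m₁ n ≤ F * (1 - fr) := by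
    set K := Finset.univ.filter (fun n => fr < μ n) with hK
    have hs₁K : ∑ n, m₁ n = ∑ n ∈ K, (μ n - fr) := by
      rw [hK, Finset.sum_filter]
      exact Finset.sum_congr rfl (fun n _ => hm₁ite n)
    have hKμ : ∑ n ∈ K, μ n ≤ t := by
      rw [ht]
      exact Finset.sum_le_sum_of_subset_of_nonneg (Finset.subset_univ K)
        (fun n _ _ => hμ0 n)
    rcases le_or_gt ((K.card : ℕ) : ℝ) F with hk | hk
    · calc ∑ n, m₁ n = ∑ n ∈ K, (μ n - fr) := hs₁K
        _ ≤ ∑ _n ∈ K, (1 - fr) := Finset.sum_le_sum (fun n _ => by linarith [hμ1 n])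
        _ = (K.card : ℝ) * (1 - fr) := by rw [Finset.sum_const, nsmul_eq_mul]
        _ ≤ F * (1 - fr) := mul_le_mul_of_nonneg_right hk (by linarith)
    · have hk' : F + 1 ≤ ((K.card : ℕ) : ℝ) := by
        have h1 : (⌊t⌋ : ℤ) < (K.card : ℤ) := by
          rw [hF] at hk; exact_mod_cast hk
        have h2 : (⌊t⌋ : ℤ) + 1 ≤ (K.card : ℤ) := h1
        rw [hF]; exact_mod_cast h2
      calc ∑ n, m₁ n = ∑ n ∈ K, (μ n - fr) := hs₁K
        _ = (∑ n ∈ K, μ n) - (K.card : ℝ) * fr := by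
            rw [Finset.sum_sub_distrib, Finset.sum_const, nsmul_eq_mul]
        _ ≤ t - (F + 1) * fr := by
            have := mul_le_mul_of_nonneg_right hk' (le_of_lt hfr0)
            linarith
        _ = F * (1 - fr) := by rw [htfr]; ring
  -- m₂ bound
  have hm₂ite : ∀ n, m₂ n = if 1 - fr < μ n then μ n - (1 - fr) else 0 := by
    intro n; rw [hm₂' n]
    split
    · next h => exact max_eq_left (by linarith)
    · next h => push_neg at h; exact max_eq_right (by linarith)
  have hs₂le : ∑ n, m₂ n ≤ (F + 1) * fr := by
    set K := Finset.univ.filter (fun n => 1 - fr < μ n) with hK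
    have hs₂K : ∑ n, m₂ n = ∑ n ∈ K, (μ n - (1 - fr)) := by
      rw [hK, Finset.sum_filter]
      exact Finset.sum_congr rfl (fun n _ => hm₂ite n)
    have hKμ : ∑ n ∈ K, μ n ≤ t := by
      rw [ht]
      exact Finset.sum_le_sum_of_subset_of_nonneg (Finset.subset_univ K)
        (fun n _ _ => hμ0 n)
    rcases le_or_gt ((K.card : ℕ) : ℝ) (F + 1) with hk | hk
    · calc ∑ n, m₂ n = ∑ n ∈ K, (μ n - (1 - fr)) := hs₂K
        _ ≤ ∑ _n ∈ K, fr := Finset.sum_le_sum (fun n _ => by linarith [hμ1 n])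
        _ = (K.card : ℝ) * fr := by rw [Finset.sum_const, nsmul_eq_mul]
        _ ≤ (F + 1) * fr := mul_le_mul_of_nonneg_right hk (le_of_lt hfr0)
    · have hk' : F + 2 ≤ ((K.card : ℕ) : ℝ) := by
        have h1 : (⌊t⌋ : ℤ) + 1 < (K.card : ℤ) := by
          rw [hF] at hk; exact_mod_cast hk
        have h2 : (⌊t⌋ : ℤ) + 2 ≤ (K.card : ℤ) := by omega
        rw [hF]; exact_mod_cast h2
      calc ∑ n, m₂ n = ∑ n ∈ K, (μ n - (1 - fr)) := hs₂K
        _ = (∑ n ∈ K, μ n) - (K.card : ℝ) * (1 - fr) := by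
            rw [Finset.sum_sub_distrib, Finset.sum_const, nsmul_eq_mul]
        _ ≤ t - (F + 2) * (1 - fr) := by
            have := mul_le_mul_of_nonneg_right hk' (by linarith : (0:ℝ) ≤ 1 - fr)
            linarith
        _ ≤ (F + 1) * fr := by rw [htfr]; nlinarith [hfr1]
  -- positivity of the denominator
  have hD : t - ∑ n, m₁ n - ∑ n, m₂ n = ∑ n, (μ n - m₁ n - m₂ n) := by
    rw [ht, Finset.sum_sub_distrib, Finset.sum_sub_distrib]
  have hex : ∃ n, 0 < μ n ∧ μ n < 1 := by
    by_contra hcon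
    push_neg at hcon
    apply htni
    refine ⟨((Finset.univ.filter (fun n => 1 ≤ μ n)).card : ℤ), ?_⟩
    have hμ01 : ∀ n, μ n = if 1 ≤ μ n then (1 : ℝ) else 0 := by
      intro n
      rcases lt_or_ge 0 (μ n) with h | h
      · have h' := hcon n h
        rw [if_pos h']; linarith [hμ1 n]
      · rw [if_neg (by linarith : ¬ (1:ℝ) ≤ μ n)]; linarith [hμ0 n]
    push_cast
    rw [ht]
    calc ((Finset.univ.filter (fun n => 1 ≤ μ n)).card : ℝ)
        = ∑ n, if 1 ≤ μ n then (1 : ℝ) else 0 := by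
          rw [← Finset.sum_filter, Finset.sum_const, nsmul_eq_mul, mul_one]
      _ = ∑ n, μ n := Finset.sum_congr rfl (fun n _ => (hμ01 n).symm)
  obtain ⟨nx, hnx0, hnx1⟩ := hex
  have hgpos : 0 < μ nx - m₁ nx - m₂ nx := by
    rw [hm₁ nx, hm₂' nx]
    rcases max_cases (μ nx - fr) 0 with ⟨e1, he1⟩ | ⟨e1, he1⟩ <;>
      rcases max_cases (μ nx - (1 - fr)) 0 with ⟨e2, he2⟩ | ⟨e2, he2⟩ <;>
      rw [e1, e2] <;> linarith
  have hDpos : 0 < t - ∑ n, m₁ n - ∑ n, m₂ n := by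
    rw [hD]
    calc (0:ℝ) < μ nx - m₁ nx - m₂ nx := hgpos
      _ ≤ ∑ n, (μ n - m₁ n - m₂ n) :=
          Finset.single_le_sum (fun n _ => hg n) (Finset.mem_univ nx)
  -- bounds on r
  have hr0 : 0 ≤ r := by
    rw [hr, hcoeq]
    exact div_nonneg (by linarith [hs₁le]) (le_of_lt hDpos)
  have hr1 : r ≤ 1 := by
    rw [hr, hcoeq]
    rw [div_le_one hDpos]
    have e1 : F * (1 - fr) = F - F * fr := by ring
    have e2 : (F + 1) * fr = F * fr + fr := by ring
    rw [htfr]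
    nlinarith [hs₂le]
  -- pointwise comparison facts
  have hglo : ∀ n, μlo n ≤ μ n - m₂ n := by
    intro n; rw [hμlo n]; nlinarith [hg n, hr1]
  have hghi : ∀ n, μhi n ≤ μ n - m₁ n := by
    intro n; rw [hμhi n]; nlinarith [hg n, hr0]
  have hlo_le : ∀ n, μlo n ≤ 1 - fr := by
    intro n
    have h2 : μ n - m₂ n ≤ 1 - fr := by
      rw [hm₂' n]
      rcases max_cases (μ n - (1 - fr)) 0 with ⟨e, he⟩ | ⟨e, he⟩ <;> rw [e] <;>
        linarith [hμ1 n]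
    linarith [hglo n]
  have hhi_le : ∀ n, μhi n ≤ fr := by
    intro n
    have h2 : μ n - m₁ n ≤ fr := by
      rw [hm₁ n]
      rcases max_cases (μ n - fr) 0 with ⟨e, he⟩ | ⟨e, he⟩ <;> rw [e] <;> linarith [hμ1 n]
    linarith [hghi n]
  have hlo0 : ∀ n, 0 ≤ μlo n := fun n => by
    rw [hμlo n]; exact add_nonneg (hm₁0 n) (mul_nonneg hr0 (hg n))
  have hhi0 : ∀ n, 0 ≤ μhi n := fun n => by
    rw [hμhi n]; exact add_nonneg (hm₂0 n) (mul_nonneg (by linarith) (hg n))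
  have hsum_lo : ∑ n, μlo n = F * (((⌈t⌉ : ℤ) : ℝ) - t) := by
    have h₁ : ∑ n, μlo n = ∑ n, m₁ n + r * ∑ n, (μ n - m₁ n - m₂ n) := by
      rw [Finset.mul_sum, ← Finset.sum_add_distrib]
      exact Finset.sum_congr rfl (fun n _ => hμlo n)
    rw [h₁, ← hD, hr, div_mul_cancel₀ _ (ne_of_gt hDpos)]
    ring
  have hsum_hi : ∑ n, μhi n = ((⌈t⌉ : ℤ) : ℝ) * fr := by
    have h₁ : ∑ n, μhi n = ∑ n, m₂ n + (1 - r) * ∑ n, (μ n - m₁ n - m₂ n) := by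
      rw [Finset.mul_sum, ← Finset.sum_add_distrib]
      exact Finset.sum_congr rfl (fun n _ => hμhi n)
    have h₂ : (1 - r) * (t - ∑ n, m₁ n - ∑ n, m₂ n)
        = (t - ∑ n, m₁ n - ∑ n, m₂ n) - (F * (((⌈t⌉ : ℤ) : ℝ) - t) - ∑ n, m₁ n) := by
      rw [hr, sub_mul, one_mul, div_mul_cancel₀ _ (ne_of_gt hDpos)]
    rw [h₁, ← hD, h₂, hco, hfr]
    ring
  -- bounds on the subset sizes
  have hfl0 : (0 : ℤ) ≤ ⌊t⌋ := by omega
  have hτ₁cast : ((⌊t⌋.toNat : ℕ) : ℝ) = F := by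
    rw [hF]; exact_mod_cast Int.toNat_of_nonneg hfl0
  have hflN : ⌊t⌋ ≤ (N : ℤ) := by
    have hFN : F ≤ (N : ℝ) := by linarith
    rw [hF] at hFN; exact_mod_cast hFN
  have hτ₁N : ⌊t⌋.toNat ≤ N := Int.toNat_le.mpr hflN
  have hceilN : ⌈t⌉ ≤ (N : ℤ) := Int.ceil_le.mpr (by exact_mod_cast htN)
  have hτ₂N : ⌈t⌉.toNat ≤ N := Int.toNat_le.mpr hceilN
  have hτ₂cast : ((⌈t⌉.toNat : ℕ) : ℝ) = F + 1 := by
    rw [← hco]; exact_mod_cast Int.toNat_of_nonneg (by omega : (0 : ℤ) ≤ ⌈t⌉)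
  have hcardU : (Finset.univ : Finset (Fin N)).card = N := by simp
  obtain ⟨α, hα0, _, hαdeg, _⟩ := Stmt18Aux.fill N Finset.univ ⌊t⌋.toNat μlo (1 - fr)
    (by rw [hcardU]) (by linarith) (fun n _ => hlo0 n) (fun n _ => hlo_le n)
    (by rw [hτ₁cast, hsum_lo, hcoeq])
    (by rw [hcardU]; exact hτ₁N)
  obtain ⟨β, hβ0, _, hβdeg, _⟩ := Stmt18Aux.fill N Finset.univ ⌈t⌉.toNat μhi fr
    (by rw [hcardU]) (le_of_lt hfr0) (fun n _ => hhi0 n) (fun n _ => hhi_le n)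
    (by rw [hτ₂cast, hsum_hi, hco])
    (by rw [hcardU]; exact hτ₂N)
  refine ⟨fun n => by rw [hμlo n, hμhi n]; ring, hlo0, hhi0, hsum_lo, hsum_hi,
    fun n => by rw [hcoeq]; exact hlo_le n, hhi_le,
    ⟨α, hα0, fun n => hαdeg n (Finset.mem_univ n)⟩,
    ⟨β, hβ0, fun n => hβdeg n (Finset.mem_univ n)⟩⟩
end
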